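/- arXiv:2408.06801 — 9 statements merged into one kernel-verified Lean document; each statement's English description precedes it below -/
import Mathlib

section
/- Weighted Poincaré inequality: For every function f : [0,1] → ℝ (absolutely continuous on compact subintervals of (0,1)) with ∫₀¹ y(1−y)|f′(y)|² dy < +∞, one has ∫₀¹ |f(y) − ∫₀¹ f(z) dz|² dy ≤ (1/2) ∫₀¹ y(1−y)|f′(y)|² dy; equivalently, ∫₀¹ f(y)² dy − (∫₀¹ f(y) dy)² ≤ (1/2) ∫₀¹ y(1−y)|f′(y)|² dy. -/
set_option maxHeartbeats 1000000

open MeasureTheory intervalIntegral Set Filter Topology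

private noncomputable def pa (n : ℕ) : ℝ := 1 / (n + 2)
private noncomputable def pb (n : ℕ) : ℝ := 1 - 1 / (n + 2)

private lemma pa_pos (n : ℕ) : 0 < pa n := by
  have : (0:ℝ) < (n:ℝ) + 2 := by positivity
  exact div_pos one_pos this

private lemma pa_le_half (n : ℕ) : pa n ≤ 1 / 2 := by
  have h2 : (2:ℝ) ≤ (n:ℝ) + 2 := by
    have : (0:ℝ) ≤ (n:ℝ) := Nat.cast_nonneg n
    linarith
  unfold pa
  exact div_le_div_of_nonneg_left one_pos.le two_pos h2

private lemma pa_le_pb (n : ℕ) : pa n ≤ pb n := by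
  have h := pa_le_half n
  have : pa n = 1 / ((n:ℝ)+2) := rfl
  simp only [pb]; linarith

private lemma pb_lt_one (n : ℕ) : pb n < 1 := by
  have := pa_pos n; simp only [pb, pa] at *; linarith

private lemma pa_anti : Antitone pa := by
  intro m n h
  apply div_le_div_of_nonneg_left one_pos.le (by positivity)
  have : (m:ℝ) ≤ n := by exact_mod_cast h
  linarith

private lemma pb_mono : Monotone pb := by
  intro m n h
  have := pa_anti h
  simp only [pb, pa] at *; linarith

private lemma pa_tendsto : Tendsto pa atTop (𝓝 0) := by
  have h : Tendsto (fun n : ℕ => 1 / ((n:ℝ) + 1)) atTop (𝓝 0) := tendsto_one_div_add_atTop_nhds_zero_nat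
  have : Tendsto (fun n : ℕ => 1 / ((n:ℝ) + 1)) atTop (𝓝 0) := h
  apply squeeze_zero (fun n => (pa_pos n).le) (fun n => ?_) this
  apply div_le_div_of_nonneg_left one_pos.le (by positivity)
  linarith

private lemma pb_tendsto : Tendsto pb atTop (𝓝 1) := by
  have : Tendsto (fun n => 1 - pa n) atTop (𝓝 (1 - 0)) := tendsto_const_nhds.sub pa_tendsto
  exact (by simpa using this : Tendsto (fun n => 1 - pa n) atTop (𝓝 1))

private lemma Icc_subset_unit (n : ℕ) : Icc (pa n) (pb n) ⊆ Ioo (0:ℝ) 1 :=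
  fun x hx => ⟨lt_of_lt_of_le (pa_pos n) hx.1, lt_of_le_of_lt hx.2 (pb_lt_one n)⟩

private lemma iUnion_Ioc_eq : (⋃ n, Ioc (pa n) (pb n)) = Ioo (0:ℝ) 1 := by
  apply Subset.antisymm
  · exact iUnion_subset fun n => (Ioc_subset_Icc_self).trans (Icc_subset_unit n)
  · intro x hx
    obtain ⟨n, hn⟩ := exists_nat_gt (max (1 / x) (1 / (1 - x)))
    refine mem_iUnion.2 ⟨n, ?_, ?_⟩
    · have h1 : 1 / x < (n:ℝ) + 2 := by
        have := le_max_left (1/x) (1/(1-x)); linarith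
      have hx0 : 0 < x := hx.1
      calc pa n = 1 / ((n:ℝ) + 2) := rfl
        _ < x := by
          rw [div_lt_iff₀ (by positivity)]
          rw [div_lt_iff₀ hx0] at h1
          linarith
    · have h1 : 1 / (1 - x) < (n:ℝ) + 2 := by
        have := le_max_right (1/x) (1/(1-x)); linarith
      have hx1 : 0 < 1 - x := by linarith [hx.2]
      have : 1 / ((n:ℝ) + 2) < 1 - x := by
        rw [div_lt_iff₀ (by positivity)]
        rw [div_lt_iff₀ hx1] at h1
        linarith
      simp only [pb]; linarith

private lemma tendsto_pp (h : ℝ → ℝ) (hint : IntegrableOn h (Ioo 0 1) volume) :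
    Tendsto (fun n => ∫ x in (pa n)..(pb n), h x) atTop
      (𝓝 (∫ x in Ioo (0:ℝ) 1, h x)) := by
  have hmono : Monotone fun n => Ioc (pa n) (pb n) := fun m n hmn =>
    Ioc_subset_Ioc (pa_anti hmn) (pb_mono hmn)
  have := tendsto_setIntegral_of_monotone (μ := volume) (f := h)
    (fun n => measurableSet_Ioc) hmono (by rw [iUnion_Ioc_eq]; exact hint)
  rw [iUnion_Ioc_eq] at this
  refine this.congr fun n => ?_
  rw [intervalIntegral.integral_of_le (pa_le_pb n)]

/-- Weighted Poincaré inequality (Lemma 4.1). -/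
theorem weighted_poincare
    (f f' : ℝ → ℝ)
    (hcont : ContinuousOn f (Set.Icc 0 1))
    (hderiv : ∀ y ∈ Set.Ioo (0:ℝ) 1, HasDerivAt f (f' y) y)
    (hfint : IntervalIntegrable f volume 0 1)
    (hf2int : IntervalIntegrable (fun y => (f y) ^ 2) volume 0 1)
    (hwint : IntegrableOn (fun y => y * (1 - y) * (f' y) ^ 2) (Set.Ioo 0 1) volume) :
    (∫ y in (0:ℝ)..1, (f y - ∫ z in (0:ℝ)..1, f z) ^ 2)
      ≤ (1 / 2) * ∫ y in (0:ℝ)..1, y * (1 - y) * (f' y) ^ 2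
    ∧ (∫ y in (0:ℝ)..1, (f y) ^ 2) - (∫ y in (0:ℝ)..1, f y) ^ 2
      ≤ (1 / 2) * ∫ y in (0:ℝ)..1, y * (1 - y) * (f' y) ^ 2 := by
  set m : ℝ := ∫ z in (0:ℝ)..1, f z with hm
  set u : ℝ → ℝ := fun t => ∫ s in (0:ℝ)..t, (f s - m) with hu
  -- basic integrability
  have hFint : IntervalIntegrable (fun s => f s - m) volume 0 1 :=
    hfint.sub intervalIntegrable_const
  have hF2int : IntervalIntegrable (fun s => (f s - m) ^ 2) volume 0 1 := by
    have e : (fun s => (f s - m) ^ 2) = fun s => f s ^ 2 - (2 * m) * f s + m ^ 2 := by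
      funext s; ring
    rw [e]
    exact (hf2int.sub (hfint.const_mul (2 * m))).add intervalIntegrable_const
  have hFcont : ContinuousOn (fun s => f s - m) (Icc 0 1) := hcont.sub continuousOn_const
  -- u basic facts
  have hu0 : u 0 = 0 := intervalIntegral.integral_same
  have hu1 : u 1 = 0 := by
    have : u 1 = (∫ s in (0:ℝ)..1, f s) - ∫ s in (0:ℝ)..1, (m:ℝ) :=
      intervalIntegral.integral_sub hfint intervalIntegrable_const
    simp [intervalIntegral.integral_const] at this
    simpa [← hm] using this
  have hucont : ContinuousOn u (Icc 0 1) := by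
    have h01 : (0:ℝ) ≤ 1 := zero_le_one
    have := continuousOn_primitive_interval (a := (0:ℝ)) (b := 1) (μ := volume)
      (f := fun s => f s - m) ?_
    · simpa [Set.uIcc_of_le h01] using this
    · rw [Set.uIcc_of_le h01]
      rw [intervalIntegrable_iff_integrableOn_Icc_of_le h01] at hFint
      exact hFint
  -- bound on f - m
  obtain ⟨M0, hM0⟩ := isCompact_Icc.exists_bound_of_continuousOn hFcont
  set M : ℝ := max M0 0 with hMdef
  have hMnn : 0 ≤ M := le_max_right _ _
  have hM : ∀ t ∈ Icc (0:ℝ) 1, |f t - m| ≤ M := fun t ht =>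
    (hM0 t ht).trans (le_max_left _ _)
  -- bounds on u
  have hsub01 : ∀ t ∈ Icc (0:ℝ) 1, Set.uIcc (0:ℝ) t ⊆ Set.uIcc (0:ℝ) 1 := by
    intro t ht
    rw [Set.uIcc_of_le ht.1, Set.uIcc_of_le zero_le_one]
    exact Icc_subset_Icc le_rfl ht.2
  have hsub11 : ∀ t ∈ Icc (0:ℝ) 1, Set.uIcc t (1:ℝ) ⊆ Set.uIcc (0:ℝ) 1 := by
    intro t ht
    rw [Set.uIcc_of_le ht.2, Set.uIcc_of_le zero_le_one]
    exact Icc_subset_Icc ht.1 le_rfl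
  have hub1 : ∀ t ∈ Icc (0:ℝ) 1, |u t| ≤ M * t := by
    intro t ht
    have h := intervalIntegral.norm_integral_le_of_norm_le_const (C := M)
      (f := fun s => f s - m) (a := (0:ℝ)) (b := t) ?_
    · simp only [sub_zero] at h
      rw [abs_of_nonneg ht.1] at h
      simpa [hu] using h
    · intro x hx
      rw [Set.uIoc_of_le ht.1] at hx
      exact hM x ⟨hx.1.le, hx.2.trans ht.2⟩
  have hub2 : ∀ t ∈ Icc (0:ℝ) 1, |u t| ≤ M * (1 - t) := by
    intro t ht
    have hadj := intervalIntegral.integral_add_adjacent_intervals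
      (a := (0:ℝ)) (b := t) (c := (1:ℝ)) (f := fun s => f s - m)
      (hFint.mono_set (hsub01 t ht)) (hFint.mono_set (hsub11 t ht))
    have hut : u t = -∫ s in t..(1:ℝ), (f s - m) := by
      have : u t + (∫ s in t..(1:ℝ), (f s - m)) = u 1 := hadj
      rw [hu1] at this; linarith
    rw [hut, abs_neg]
    have h := intervalIntegral.norm_integral_le_of_norm_le_const (C := M)
      (f := fun s => f s - m) (a := t) (b := (1:ℝ)) ?_
    · rw [abs_of_nonneg (by linarith [ht.2] : (0:ℝ) ≤ 1 - t)] at h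
      simpa using h
    · intro x hx
      rw [Set.uIoc_of_le ht.2] at hx
      exact hM x ⟨ht.1.trans hx.1.le, hx.2⟩
  -- derivative of u
  have hu_deriv : ∀ t ∈ Ioo (0:ℝ) 1, HasDerivAt u (f t - m) t := by
    intro t ht
    have hmem : Icc (0:ℝ) 1 ∈ 𝓝 t := Icc_mem_nhds ht.1 ht.2
    refine intervalIntegral.integral_hasDerivAt_right
      (hFint.mono_set (hsub01 t ⟨ht.1.le, ht.2.le⟩)) ?_ ?_
    · exact ⟨Icc 0 1, hmem, hFcont.aestronglyMeasurable measurableSet_Icc⟩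
    · exact hFcont.continuousAt hmem
  -- measurability of f'
  have hf'meas : AEStronglyMeasurable f' (volume.restrict (Ioo 0 1)) := by
    have h1 : Measurable (deriv f) := measurable_deriv f
    refine h1.aestronglyMeasurable.restrict.congr ?_
    filter_upwards [ae_restrict_mem measurableSet_Ioo] with t ht
    exact (hderiv t ht).deriv
  -- integrability on Ioo 0 1
  have hVint : IntegrableOn (fun t => (f t - m) ^ 2) (Ioo 0 1) volume := by
    rw [intervalIntegrable_iff_integrableOn_Icc_of_le zero_le_one] at hF2int
    exact hF2int.mono_set Ioo_subset_Icc_self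
  have hucIoo : ContinuousOn u (Ioo 0 1) := hucont.mono Ioo_subset_Icc_self
  have hgcont : ContinuousOn (fun t : ℝ => t * (1 - t)) (Ioo 0 1) :=
    (continuous_id.mul (continuous_const.sub continuous_id)).continuousOn
  have hgne : ∀ t ∈ Ioo (0:ℝ) 1, t * (1 - t) ≠ 0 := fun t ht =>
    (mul_pos ht.1 (by linarith [ht.2])).ne'
  have hBmeas : AEStronglyMeasurable (fun t => (u t) ^ 2 / (t * (1 - t)))
      (volume.restrict (Ioo 0 1)) :=
    (((hucIoo.pow 2).div hgcont hgne).aestronglyMeasurable measurableSet_Ioo)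
  have hBptbd : ∀ t ∈ Ioo (0:ℝ) 1, (u t) ^ 2 / (t * (1 - t)) ≤ M ^ 2 := by
    intro t ht
    have hg : 0 < t * (1 - t) := mul_pos ht.1 (by linarith [ht.2])
    have h1 := hub1 t (Ioo_subset_Icc_self ht)
    have h2 := hub2 t (Ioo_subset_Icc_self ht)
    rw [div_le_iff₀ hg]
    nlinarith [abs_nonneg (u t), sq_abs (u t), ht.1.le, sub_nonneg.2 ht.2.le]
  have hBint : IntegrableOn (fun t => (u t) ^ 2 / (t * (1 - t))) (Ioo 0 1) volume := by
    refine ⟨hBmeas, HasFiniteIntegral.restrict_of_bounded (C := M ^ 2)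
      (by simp [Real.volume_Ioo]) ?_⟩
    filter_upwards [ae_restrict_mem measurableSet_Ioo] with t ht
    have hg : 0 < t * (1 - t) := mul_pos ht.1 (by linarith [ht.2])
    rw [Real.norm_eq_abs, abs_of_nonneg (by positivity)]
    exact hBptbd t ht
  have hCint : IntegrableOn (fun t => f' t * u t) (Ioo 0 1) volume := by
    refine Integrable.mono' ((hwint.add hBint).div_const 2)
      (hf'meas.mul (hucIoo.aestronglyMeasurable measurableSet_Ioo)) ?_
    filter_upwards [ae_restrict_mem measurableSet_Ioo] with t ht
    have hg : 0 < t * (1 - t) := mul_pos ht.1 (by linarith [ht.2])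
    have heq : (t * (1 - t) * f' t ^ 2 + u t ^ 2 / (t * (1 - t))) / 2
        = ((t * (1 - t)) ^ 2 * f' t ^ 2 + u t ^ 2) / (2 * (t * (1 - t))) := by
      field_simp
    simp only [Pi.add_apply]
    rw [Real.norm_eq_abs, abs_mul, heq, le_div_iff₀ (by positivity)]
    nlinarith [sq_nonneg (t * (1 - t) * |f' t| - |u t|), sq_abs (f' t), sq_abs (u t),
      abs_nonneg (f' t), abs_nonneg (u t)]
  clear_value m u
  set VI : ℝ := ∫ t in Ioo (0:ℝ) 1, (f t - m) ^ 2 with hVI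
  set BI : ℝ := ∫ t in Ioo (0:ℝ) 1, (u t) ^ 2 / (t * (1 - t)) with hBI
  set CI : ℝ := ∫ t in Ioo (0:ℝ) 1, f' t * u t with hCI
  set AI : ℝ := ∫ t in Ioo (0:ℝ) 1, t * (1 - t) * (f' t) ^ 2 with hAI
  have hVnn : 0 ≤ VI := setIntegral_nonneg measurableSet_Ioo fun t _ => sq_nonneg _
  have hAnn : 0 ≤ AI := setIntegral_nonneg measurableSet_Ioo fun t ht =>
    mul_nonneg (mul_nonneg ht.1.le (by linarith [ht.2])) (sq_nonneg _)
  -- integration by parts : CI = -VI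
  have hIBP : CI = -VI := by
    set B : ℝ → ℝ := fun t => (f t - m) * u t with hB
    have hBderiv : ∀ t ∈ Ioo (0:ℝ) 1, HasDerivAt B (f' t * u t + (f t - m) ^ 2) t := by
      intro t ht
      have h1 := ((hderiv t ht).sub_const m).mul (hu_deriv t ht)
      exact h1.congr_deriv (by ring)
    have key : ∀ n : ℕ, (∫ t in (pa n)..(pb n), (f' t * u t + (f t - m) ^ 2))
        = B (pb n) - B (pa n) := by
      intro n
      apply intervalIntegral.integral_eq_sub_of_hasDerivAt
      · intro x hx
        rw [Set.uIcc_of_le (pa_le_pb n)] at hx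
        exact hBderiv x (Icc_subset_unit n hx)
      · apply IntervalIntegrable.add
        · rw [intervalIntegrable_iff_integrableOn_Icc_of_le (pa_le_pb n)]
          exact hCint.mono_set (Icc_subset_unit n)
        · rw [intervalIntegrable_iff_integrableOn_Icc_of_le (pa_le_pb n)]
          exact hVint.mono_set (Icc_subset_unit n)
    have hintadd : IntegrableOn (fun t => f' t * u t + (f t - m) ^ 2) (Ioo 0 1) volume := by
      exact hCint.add hVint
    have hlim1 : Tendsto (fun n => ∫ t in (pa n)..(pb n), (f' t * u t + (f t - m) ^ 2))
        atTop (𝓝 (CI + VI)) := by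
      have h := tendsto_pp (fun t => f' t * u t + (f t - m) ^ 2) hintadd
      rwa [MeasureTheory.integral_add hCint hVint, ← hCI, ← hVI] at h
    have hBcont : ContinuousOn B (Icc 0 1) := hFcont.mul hucont
    have hmem1 : (1:ℝ) ∈ Icc (0:ℝ) 1 := right_mem_Icc.2 zero_le_one
    have hmem0 : (0:ℝ) ∈ Icc (0:ℝ) 1 := left_mem_Icc.2 zero_le_one
    have hpbmem : ∀ n, pb n ∈ Icc (0:ℝ) 1 := fun n =>
      ⟨(pa_pos n).le.trans (pa_le_pb n), (pb_lt_one n).le⟩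
    have hpamem : ∀ n, pa n ∈ Icc (0:ℝ) 1 := fun n =>
      ⟨(pa_pos n).le, (pa_le_pb n).trans (pb_lt_one n).le⟩
    have hpb' : Tendsto (fun n => B (pb n)) atTop (𝓝 (B 1)) := by
      refine ((hBcont 1 hmem1).tendsto).comp ?_
      exact tendsto_nhdsWithin_of_tendsto_nhds_of_eventually_within _ pb_tendsto
        (Eventually.of_forall hpbmem)
    have hpa' : Tendsto (fun n => B (pa n)) atTop (𝓝 (B 0)) := by
      refine ((hBcont 0 hmem0).tendsto).comp ?_
      exact tendsto_nhdsWithin_of_tendsto_nhds_of_eventually_within _ pa_tendsto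
        (Eventually.of_forall hpamem)
    have hlim2 : Tendsto (fun n => ∫ t in (pa n)..(pb n), (f' t * u t + (f t - m) ^ 2))
        atTop (𝓝 0) := by
      have h := hpb'.sub hpa'
      have hB1 : B 1 = 0 := by rw [hB]; simp [hu1]
      have hB0 : B 0 = 0 := by rw [hB]; simp [hu0]
      rw [hB1, hB0, sub_zero] at h
      exact h.congr fun n => (key n).symm
    have := tendsto_nhds_unique hlim1 hlim2
    linarith
  -- Hardy : 2 * BI ≤ VI
  have hHardy : 2 * BI ≤ VI := by
    set G : ℝ → ℝ := fun t => (1 - 2 * t) * (u t) ^ 2 / (t * (1 - t)) with hG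
    set q : ℝ → ℝ := fun t => (f t - m) - (1 - 2 * t) * u t / (t * (1 - t)) with hq
    have hGderiv : ∀ t ∈ Ioo (0:ℝ) 1, HasDerivAt G
        ((f t - m) ^ 2 - 2 * (u t) ^ 2 / (t * (1 - t)) - (q t) ^ 2) t := by
      intro t ht
      have hg : 0 < t * (1 - t) := mul_pos ht.1 (by linarith [ht.2])
      have h1 : HasDerivAt (fun s : ℝ => 1 - 2 * s) (-2) t := by
        simpa using ((hasDerivAt_id t).const_mul (2:ℝ)).const_sub 1
      have h2 : HasDerivAt (fun s => (u s) ^ 2) (2 * u t * (f t - m)) t := by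
        have := (hu_deriv t ht).pow 2
        exact this.congr_deriv (by norm_num)
      have hnum : HasDerivAt (fun s => (1 - 2 * s) * (u s) ^ 2)
          ((-2) * (u t) ^ 2 + (1 - 2 * t) * (2 * u t * (f t - m))) t := h1.mul h2
      have hden : HasDerivAt (fun s : ℝ => s * (1 - s)) (1 - 2 * t) t := by
        have h3 : HasDerivAt (fun s : ℝ => 1 - s) (-1) t := by
          simpa using (hasDerivAt_id t).const_sub 1
        have := (hasDerivAt_id t).mul h3
        exact this.congr_deriv (by rw [id_eq]; ring)
      have h := hnum.div hden hg.ne'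
      refine h.congr_deriv ?_
      rw [hq]
      have hg0 := hg.ne'
      have ht0 : t ≠ 0 := ht.1.ne'
      have ht1 : (1:ℝ) - t ≠ 0 := (sub_pos.2 ht.2).ne'
      field_simp
      ring
    have hDcont : ContinuousOn
        (fun t => (f t - m) ^ 2 - 2 * (u t) ^ 2 / (t * (1 - t))) (Ioo 0 1) := by
      exact ((hFcont.mono Ioo_subset_Icc_self).pow 2).sub
        ((continuousOn_const.mul (hucIoo.pow 2)).div hgcont hgne)
    have hqcont : ContinuousOn q (Ioo 0 1) := by
      rw [hq]
      exact (hFcont.mono Ioo_subset_Icc_self).sub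
        (((by fun_prop : ContinuousOn (fun t : ℝ => 1 - 2 * t) (Ioo 0 1)).mul
          hucIoo).div hgcont hgne)
    have hIccIoo : ∀ n : ℕ, Set.uIcc (pa n) (pb n) ⊆ Ioo (0:ℝ) 1 := by
      intro n
      rw [Set.uIcc_of_le (pa_le_pb n)]
      exact Icc_subset_unit n
    have key : ∀ n : ℕ, G (pb n) - G (pa n)
        ≤ ∫ t in (pa n)..(pb n), ((f t - m) ^ 2 - 2 * (u t) ^ 2 / (t * (1 - t))) := by
      intro n
      have hFTC : (∫ t in (pa n)..(pb n),
          ((f t - m) ^ 2 - 2 * (u t) ^ 2 / (t * (1 - t)) - (q t) ^ 2))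
          = G (pb n) - G (pa n) := by
        apply intervalIntegral.integral_eq_sub_of_hasDerivAt
        · intro x hx
          exact hGderiv x (hIccIoo n hx)
        · apply ContinuousOn.intervalIntegrable
          exact (hDcont.sub (hqcont.pow 2)).mono (hIccIoo n)
      have hsplit : (∫ t in (pa n)..(pb n),
          ((f t - m) ^ 2 - 2 * (u t) ^ 2 / (t * (1 - t)) - (q t) ^ 2))
          = (∫ t in (pa n)..(pb n), ((f t - m) ^ 2 - 2 * (u t) ^ 2 / (t * (1 - t))))
            - ∫ t in (pa n)..(pb n), (q t) ^ 2 := by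
        apply intervalIntegral.integral_sub
        · exact (hDcont.mono (hIccIoo n)).intervalIntegrable
        · exact ((hqcont.pow 2).mono (hIccIoo n)).intervalIntegrable
      have hqnn : 0 ≤ ∫ t in (pa n)..(pb n), (q t) ^ 2 :=
        intervalIntegral.integral_nonneg (pa_le_pb n) (fun x _ => sq_nonneg _)
      rw [hsplit] at hFTC
      linarith
    have hlim1 : Tendsto
        (fun n => ∫ t in (pa n)..(pb n), ((f t - m) ^ 2 - 2 * (u t) ^ 2 / (t * (1 - t))))
        atTop (𝓝 (VI - 2 * BI)) := by
      have hint : IntegrableOn (fun t => (f t - m) ^ 2 - 2 * (u t) ^ 2 / (t * (1 - t)))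
          (Ioo 0 1) volume := by
        have h2 : IntegrableOn (fun t => 2 * ((u t) ^ 2 / (t * (1 - t)))) (Ioo 0 1) volume :=
          hBint.const_mul 2
        have h3 := hVint.sub h2
        refine MeasureTheory.IntegrableOn.congr_fun h3 ?_ measurableSet_Ioo
        intro x _; simp only [Pi.sub_apply]; ring
      have h := tendsto_pp _ hint
      have hsub : (∫ t in Ioo (0:ℝ) 1, ((f t - m) ^ 2 - 2 * (u t) ^ 2 / (t * (1 - t))))
          = VI - 2 * BI := by
        have h2 : IntegrableOn (fun t => 2 * ((u t) ^ 2 / (t * (1 - t)))) (Ioo 0 1) volume :=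
          hBint.const_mul 2
        have e : (∫ t in Ioo (0:ℝ) 1, ((f t - m) ^ 2 - 2 * (u t) ^ 2 / (t * (1 - t))))
            = ∫ t in Ioo (0:ℝ) 1, ((f t - m) ^ 2 - 2 * ((u t) ^ 2 / (t * (1 - t)))) := by
          apply setIntegral_congr_fun measurableSet_Ioo
          intro x _; ring
        rw [e, MeasureTheory.integral_sub hVint h2, MeasureTheory.integral_const_mul,
          ← hVI, ← hBI]
      rwa [hsub] at h
    have hGbound : ∀ t ∈ Ioo (0:ℝ) 1, |G t| ≤ M ^ 2 * (2 * min t (1 - t)) := by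
      intro t ht
      have hg : 0 < t * (1 - t) := mul_pos ht.1 (by linarith [ht.2])
      have hub1' := hub1 t (Ioo_subset_Icc_self ht)
      have hub2' := hub2 t (Ioo_subset_Icc_self ht)
      have husq1 : (u t) ^ 2 ≤ (M * t) ^ 2 := by
        nlinarith [sq_abs (u t), abs_nonneg (u t)]
      have husq2 : (u t) ^ 2 ≤ (M * (1 - t)) ^ 2 := by
        nlinarith [sq_abs (u t), abs_nonneg (u t)]
      have habs : |1 - 2 * t| ≤ 1 := by
        rw [abs_le]; constructor <;> nlinarith [ht.1, ht.2]
      rw [hG]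
      simp only []
      rw [abs_div, abs_mul, abs_of_nonneg (sq_nonneg (u t)),
        abs_of_nonneg hg.le, div_le_iff₀ hg]
      rcases le_total t (1 - t) with hc | hc
      · rw [min_eq_left hc]
        calc |1 - 2 * t| * u t ^ 2 ≤ 1 * (M * t) ^ 2 :=
              mul_le_mul habs husq1 (sq_nonneg _) zero_le_one
          _ ≤ M ^ 2 * (2 * t) * (t * (1 - t)) := by nlinarith [hMnn, ht.1.le, ht.2.le]
      · rw [min_eq_right hc]
        calc |1 - 2 * t| * u t ^ 2 ≤ 1 * (M * (1 - t)) ^ 2 :=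
              mul_le_mul habs husq2 (sq_nonneg _) zero_le_one
          _ ≤ M ^ 2 * (2 * (1 - t)) * (t * (1 - t)) := by
              nlinarith [hMnn, ht.1.le, ht.2.le]
    have hGb : Tendsto (fun n => G (pb n)) atTop (𝓝 0) := by
      apply squeeze_zero_norm (a := fun n => M ^ 2 * (2 * pa n))
      · intro n
        have ht : pb n ∈ Ioo (0:ℝ) 1 := ⟨(pa_pos n).trans_le (pa_le_pb n), pb_lt_one n⟩
        have h := hGbound (pb n) ht
        have h1t : 1 - pb n = pa n := by simp [pb, pa]
        have : min (pb n) (1 - pb n) ≤ pa n := by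
          rw [h1t]; exact min_le_right _ _
        rw [Real.norm_eq_abs]
        calc |G (pb n)| ≤ M ^ 2 * (2 * min (pb n) (1 - pb n)) := h
          _ ≤ M ^ 2 * (2 * pa n) := by nlinarith [hMnn, sq_nonneg M]
      · have := pa_tendsto.const_mul (M ^ 2 * 2)
        simp only [mul_zero] at this
        refine this.congr fun n => by ring
    have hGa : Tendsto (fun n => G (pa n)) atTop (𝓝 0) := by
      apply squeeze_zero_norm (a := fun n => M ^ 2 * (2 * pa n))
      · intro n
        have ht : pa n ∈ Ioo (0:ℝ) 1 :=
          ⟨pa_pos n, (pa_le_pb n).trans_lt (pb_lt_one n)⟩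
        have h := hGbound (pa n) ht
        have : min (pa n) (1 - pa n) ≤ pa n := min_le_left _ _
        rw [Real.norm_eq_abs]
        calc |G (pa n)| ≤ M ^ 2 * (2 * min (pa n) (1 - pa n)) := h
          _ ≤ M ^ 2 * (2 * pa n) := by nlinarith [sq_nonneg M]
      · have := pa_tendsto.const_mul (M ^ 2 * 2)
        simp only [mul_zero] at this
        refine this.congr fun n => by ring
    have hlim2 : Tendsto (fun n => G (pb n) - G (pa n)) atTop (𝓝 0) := by
      have := hGb.sub hGa
      simpa using this
    have := le_of_tendsto_of_tendsto' hlim2 hlim1 key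
    linarith
  -- Cauchy-Schwarz : CI^2 ≤ AI * BI
  have hCS : CI ^ 2 ≤ AI * BI := by
    have hquad : ∀ lam : ℝ, 0 ≤ AI * (lam * lam) + (2 * CI) * lam + BI := by
      intro lam
      have hnn : 0 ≤ ∫ t in Ioo (0:ℝ) 1, (lam * lam * (t * (1 - t) * f' t ^ 2)
          + 2 * lam * (f' t * u t) + u t ^ 2 / (t * (1 - t))) := by
        apply setIntegral_nonneg measurableSet_Ioo
        intro t ht
        have hg : 0 < t * (1 - t) := mul_pos ht.1 (by linarith [ht.2])
        have he : lam * lam * (t * (1 - t) * f' t ^ 2) + 2 * lam * (f' t * u t)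
            + u t ^ 2 / (t * (1 - t))
            = (lam * (t * (1 - t)) * f' t + u t) ^ 2 / (t * (1 - t)) := by
          rw [eq_div_iff hg.ne', add_mul, div_mul_cancel₀ _ hg.ne']; ring
        rw [he]; positivity
      have hsplit : (∫ t in Ioo (0:ℝ) 1, (lam * lam * (t * (1 - t) * f' t ^ 2)
          + 2 * lam * (f' t * u t) + u t ^ 2 / (t * (1 - t))))
          = AI * (lam * lam) + (2 * CI) * lam + BI := by
        have h1 : IntegrableOn (fun t => lam * lam * (t * (1 - t) * f' t ^ 2)
            + 2 * lam * (f' t * u t)) (Ioo 0 1) volume := by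
          exact (hwint.const_mul (lam * lam)).add (hCint.const_mul (2 * lam))
        have h2 : IntegrableOn (fun t => lam * lam * (t * (1 - t) * f' t ^ 2))
            (Ioo 0 1) volume := hwint.const_mul (lam * lam)
        have h3 : IntegrableOn (fun t => 2 * lam * (f' t * u t)) (Ioo 0 1) volume :=
          hCint.const_mul (2 * lam)
        rw [MeasureTheory.integral_add h1 hBint, MeasureTheory.integral_add h2 h3,
          MeasureTheory.integral_const_mul, MeasureTheory.integral_const_mul]
        rw [hAI, hCI, hBI]; ring
      rw [hsplit] at hnn
      exact hnn
    have hd := discrim_le_zero hquad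
    rw [discrim] at hd
    nlinarith [hd]

  -- conclude VI ≤ AI / 2
  have hmain : VI ≤ (1 / 2) * AI := by
    rcases eq_or_lt_of_le hVnn with h0 | h0
    · rw [← h0]; positivity
    · nlinarith [hCS, hHardy, hIBP, h0]
  -- relate interval integrals to set integrals
  have hWeq : (∫ y in (0:ℝ)..1, y * (1 - y) * (f' y) ^ 2) = AI := by
    rw [intervalIntegral.integral_of_le zero_le_one, hAI,
      ← MeasureTheory.integral_Ioc_eq_integral_Ioo]
  have hVeq : (∫ y in (0:ℝ)..1, (f y - m) ^ 2) = VI := by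
    rw [intervalIntegral.integral_of_le zero_le_one, hVI,
      ← MeasureTheory.integral_Ioc_eq_integral_Ioo]
  have hexpand : (∫ y in (0:ℝ)..1, (f y - m) ^ 2)
      = (∫ y in (0:ℝ)..1, (f y) ^ 2) - m ^ 2 := by
    have e : ∀ y : ℝ, (f y - m) ^ 2 = f y ^ 2 - (2 * m) * f y + m ^ 2 := fun y => by ring
    calc ∫ y in (0:ℝ)..1, (f y - m) ^ 2
        = ∫ y in (0:ℝ)..1, (f y ^ 2 - (2 * m) * f y + m ^ 2) := by
          simp only [e]
      _ = (∫ y in (0:ℝ)..1, (f y ^ 2 - (2 * m) * f y)) + ∫ y in (0:ℝ)..1, (m ^ 2 : ℝ) :=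
          intervalIntegral.integral_add (f := fun y => f y ^ 2 - (2 * m) * f y)
            (g := fun _ => m ^ 2) (hf2int.sub (hfint.const_mul (2 * m)))
            intervalIntegrable_const
      _ = (∫ y in (0:ℝ)..1, f y ^ 2) - (∫ y in (0:ℝ)..1, (2 * m) * f y)
            + ∫ y in (0:ℝ)..1, (m ^ 2 : ℝ) := by
          rw [intervalIntegral.integral_sub hf2int (hfint.const_mul (2 * m))]
      _ = (∫ y in (0:ℝ)..1, f y ^ 2) - m ^ 2 := by
          rw [intervalIntegral.integral_const_mul, intervalIntegral.integral_const, ← hm]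
          simp; ring
  constructor
  · rw [hVeq, hWeq]; exact hmain
  · rw [hWeq, ← hexpand, hVeq]; exact hmain
end

section
/- Characterization of Oleinik-admissible shocks for the cubic flux: Let f(u) = u³, let u_- < 0 and u_+ ≠ u_-, and set σ := (f(u_+) − f(u_-))/(u_+ − u_-) = u_+² + u_+u_- + u_-². Then the Oleinik entropy condition 'σ ≤ (f(u) − f(u_-))/(u − u_-) for all u strictly between u_- and u_+' holds if and only if u_- < u_+ ≤ −u_- /2. -/
lemma cube_div (a b : ℝ) (h : a ≠ b) :
    (a ^ 3 - b ^ 3) / (a - b) = a ^ 2 + a * b + b ^ 2 := by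
  field_simp [sub_ne_zero.mpr h]
  ring

/-- Characterization of Oleinik-admissible shocks for the cubic flux `f(u) = u³`. -/
theorem oleinik_admissible_iff
    (uminus uplus : ℝ) (h₁ : uminus < 0) (h₂ : uplus ≠ uminus)
    (σ : ℝ) (hσ : σ = (uplus ^ 3 - uminus ^ 3) / (uplus - uminus)) :
    (∀ u : ℝ, min uminus uplus < u → u < max uminus uplus →
        σ ≤ (u ^ 3 - uminus ^ 3) / (u - uminus))
      ↔ (uminus < uplus ∧ uplus ≤ -uminus / 2) := by
  rw [hσ, cube_div _ _ h₂]
  constructor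
  · intro h
    have hlt : uminus < uplus := by
      by_contra hc
      have hpl : uplus < uminus := lt_of_le_of_ne (le_of_not_gt hc) h₂
      set u := (uplus + uminus) / 2 with hu
      have h1 : min uminus uplus < u := by
        rw [min_eq_right hpl.le]; simp only [hu]; linarith
      have h2 : u < max uminus uplus := by
        rw [max_eq_left hpl.le]; simp only [hu]; linarith
      have hne : u ≠ uminus := by simp only [hu]; intro hh; linarith [hpl]
      have := h u h1 h2
      rw [cube_div _ _ hne] at this
      nlinarith [this, hpl, h₁]
    refine ⟨hlt, ?_⟩
    by_contra hc
    push_neg at hc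
    set u := (max uminus (-uplus - uminus) + uplus) / 2 with hu
    have hm1 : uminus ≤ max uminus (-uplus - uminus) := le_max_left _ _
    have hm2 : -uplus - uminus ≤ max uminus (-uplus - uminus) := le_max_right _ _
    have hm3 : max uminus (-uplus - uminus) < uplus := by
      apply max_lt hlt; linarith
    have h1 : min uminus uplus < u := by
      rw [min_eq_left hlt.le]; simp only [hu]; linarith
    have h2 : u < max uminus uplus := by
      rw [max_eq_right hlt.le]; simp only [hu]; linarith
    have hne : u ≠ uminus := by
      have : uminus < u := by simp only [hu]; linarith
      exact ne_of_gt this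
    have := h u h1 h2
    rw [cube_div _ _ hne] at this
    have hgt : -uplus - uminus < u := by simp only [hu]; linarith
    have hult : u < uplus := by simp only [hu]; linarith
    nlinarith [this, hgt, hult]
  · rintro ⟨hlt, hle⟩ u hu1 hu2
    rw [min_eq_left hlt.le] at hu1
    rw [max_eq_right hlt.le] at hu2
    have hne : u ≠ uminus := ne_of_gt hu1
    rw [cube_div _ _ hne]
    nlinarith [hu1, hu2, hle]
end

section
/- Exponential tail bounds for the approximate rarefaction wave (Lemma 2.2, part (4)): There exists a constant C > 0 such that for all t ≥ 0: |u^R(t,x) − u_+| ≤ C δ_R e^{−2|x − λ_+ t|} for all x ≥ λ_+ t, and |u^R(t,x) − u_m| ≤ C δ_R e^{−2|x − λ_m t|} for all x ≤ λ_m t. -/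
private lemma sqrt_sub_le_div {a b d : ℝ} (hb : 0 ≤ b) (hab : b ≤ a) (hd : 0 < d)
    (hdle : d ≤ Real.sqrt a + Real.sqrt b) :
    Real.sqrt a - Real.sqrt b ≤ (a - b) / d := by
  have ha : 0 ≤ a := hb.trans hab
  rw [le_div_iff₀ hd]
  have h1 := Real.sq_sqrt ha
  have h2 := Real.sq_sqrt hb
  have h3 := Real.sqrt_le_sqrt hab
  nlinarith [Real.sqrt_nonneg a, Real.sqrt_nonneg b,
    mul_nonneg (sub_nonneg.2 h3) (sub_nonneg.2 hdle)]

private lemma tanh_lt_one' (y : ℝ) : Real.tanh y < 1 := by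
  rw [Real.tanh_eq_sinh_div_cosh, div_lt_one (Real.cosh_pos y)]
  linarith [Real.cosh_sub_sinh y, Real.exp_pos (-y)]

private lemma neg_one_lt_tanh' (y : ℝ) : -1 < Real.tanh y := by
  have h := tanh_lt_one' (-y)
  rw [Real.tanh_neg] at h
  linarith

private lemma one_sub_tanh_le (y : ℝ) : 1 - Real.tanh y ≤ 2 * Real.exp (-2 * y) := by
  have hc : 0 < Real.cosh y := Real.cosh_pos y
  have h1 : 1 - Real.tanh y = Real.exp (-y) / Real.cosh y := by
    rw [Real.tanh_eq_sinh_div_cosh, eq_div_iff hc.ne', sub_mul, one_mul,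
      div_mul_cancel₀ _ hc.ne', ← Real.cosh_sub_sinh y]
  rw [h1, div_le_iff₀ hc]
  have he : Real.exp (-2 * y) * Real.exp y = Real.exp (-y) := by
    rw [← Real.exp_add]; ring_nf
  have hce := Real.cosh_eq y
  nlinarith [Real.exp_pos (-2 * y), Real.exp_pos (-y), Real.exp_pos y]

private lemma one_add_tanh_le (y : ℝ) : 1 + Real.tanh y ≤ 2 * Real.exp (2 * y) := by
  have h := one_sub_tanh_le (-y)
  rw [Real.tanh_neg, show -2 * -y = 2 * y by ring] at h
  linarith

/-- Exponential tail bounds for the approximate rarefaction wave (Lemma 2.2, part (4)). -/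
theorem rarefaction_exponential_tails
    (um up lm lp dR : ℝ) (h0 : 0 < um) (hup : um < up)
    (hlm : lm = 3 * um ^ 2) (hlp : lp = 3 * up ^ 2) (hdR : dR = up - um)
    (w0 : ℝ → ℝ) (hw0 : ∀ x, w0 x = (lp + lm) / 2 + (lp - lm) / 2 * Real.tanh x)
    (x0 : ℝ → ℝ → ℝ) (hx0 : ∀ t, 0 ≤ t → ∀ x, x = x0 t x + w0 (x0 t x) * t)
    (uR : ℝ → ℝ → ℝ) (huR : ∀ t x, uR t x = Real.sqrt (w0 (x0 t x) / 3)) :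
    ∃ C > 0, ∀ t : ℝ, 0 ≤ t →
      (∀ x : ℝ, lp * t ≤ x → |uR t x - up| ≤ C * dR * Real.exp (-2 * |x - lp * t|)) ∧
      (∀ x : ℝ, x ≤ lm * t → |uR t x - um| ≤ C * dR * Real.exp (-2 * |x - lm * t|)) := by
  have hup0 : 0 < up := h0.trans hup
  have hdR0 : 0 < dR := by rw [hdR]; linarith
  have hlmlp : lm < lp := by rw [hlm, hlp]; nlinarith
  have hlm0 : 0 < lm := by rw [hlm]; positivity
  have hupq : up = Real.sqrt (lp / 3) := by
    rw [hlp, show (3 : ℝ) * up ^ 2 / 3 = up ^ 2 by ring, Real.sqrt_sq hup0.le]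
  have humq : um = Real.sqrt (lm / 3) := by
    rw [hlm, show (3 : ℝ) * um ^ 2 / 3 = um ^ 2 by ring, Real.sqrt_sq h0.le]
  refine ⟨(up + um) / (2 * um), by positivity, ?_⟩
  have hC1 : (1 : ℝ) ≤ (up + um) / (2 * um) := by
    rw [le_div_iff₀ (by positivity)]; linarith
  intro t ht
  -- generic facts about w0 at any point
  have hwbd : ∀ y : ℝ, lm ≤ w0 y ∧ w0 y ≤ lp := by
    intro y
    have hw := hw0 y
    constructor
    · nlinarith [neg_one_lt_tanh' y]
    · nlinarith [tanh_lt_one' y]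
  have huRlb : ∀ x : ℝ, um ≤ uR t x := by
    intro x
    rw [huR, humq]
    exact Real.sqrt_le_sqrt (by linarith [(hwbd (x0 t x)).1])
  have huRub : ∀ x : ℝ, uR t x ≤ up := by
    intro x
    rw [huR, hupq]
    exact Real.sqrt_le_sqrt (by linarith [(hwbd (x0 t x)).2])
  constructor
  · -- right tail
    intro x hx
    obtain ⟨hw1, hw2⟩ := hwbd (x0 t x)
    have hxeq := hx0 t ht x
    have hyge : x - lp * t ≤ x0 t x := by
      nlinarith [mul_nonneg (sub_nonneg.2 hw2) ht]
    have habs : |x - lp * t| = x - lp * t := abs_of_nonneg (by linarith)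
    have hexp : Real.exp (-2 * x0 t x) ≤ Real.exp (-2 * |x - lp * t|) := by
      apply Real.exp_le_exp.2; rw [habs]; linarith
    have hsum : up + um ≤ Real.sqrt (lp / 3) + Real.sqrt (w0 (x0 t x) / 3) := by
      have h1 : um ≤ Real.sqrt (w0 (x0 t x) / 3) := by
        rw [humq]; exact Real.sqrt_le_sqrt (by linarith)
      linarith [hupq.le]
    have hmain : up - uR t x ≤ (lp / 3 - w0 (x0 t x) / 3) / (up + um) := by
      have h := sqrt_sub_le_div (a := lp / 3) (b := w0 (x0 t x) / 3)
        (by linarith) (by linarith) (by positivity) hsum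
      rw [← hupq, ← huR t x] at h
      exact h
    have hbound : (lp / 3 - w0 (x0 t x) / 3) / (up + um) ≤ dR * Real.exp (-2 * x0 t x) := by
      rw [div_le_iff₀ (by positivity)]
      have hw := hw0 (x0 t x)
      have h1t := one_sub_tanh_le (x0 t x)
      have hfac : lp - lm = 3 * (up + um) * dR := by rw [hlp, hlm, hdR]; ring
      have e1 : lp - w0 (x0 t x) = (lp - lm) / 2 * (1 - Real.tanh (x0 t x)) := by
        rw [hw]; ring
      have e2 : (lp - lm) / 2 * (1 - Real.tanh (x0 t x)) ≤
          (lp - lm) / 2 * (2 * Real.exp (-2 * x0 t x)) :=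
        mul_le_mul_of_nonneg_left h1t (by linarith)
      have e3 : (lp - lm) / 2 * (2 * Real.exp (-2 * x0 t x)) =
          3 * (up + um) * dR * Real.exp (-2 * x0 t x) := by rw [hfac]; ring
      linarith
    have step1 : |uR t x - up| = up - uR t x := by
      rw [abs_of_nonpos (by linarith [huRub x])]; ring
    have step2 : dR * Real.exp (-2 * x0 t x) ≤ dR * Real.exp (-2 * |x - lp * t|) :=
      mul_le_mul_of_nonneg_left hexp hdR0.le
    have step3 : dR * Real.exp (-2 * |x - lp * t|) ≤
        (up + um) / (2 * um) * dR * Real.exp (-2 * |x - lp * t|) := by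
      have := le_mul_of_one_le_left hdR0.le hC1
      exact mul_le_mul_of_nonneg_right this (Real.exp_nonneg _)
    rw [step1]
    exact ((hmain.trans hbound).trans step2).trans step3
  · -- left tail
    intro x hx
    obtain ⟨hw1, hw2⟩ := hwbd (x0 t x)
    have hxeq := hx0 t ht x
    have hyle : x0 t x ≤ x - lm * t := by
      nlinarith [mul_nonneg (sub_nonneg.2 hw1) ht]
    have habs : |x - lm * t| = -(x - lm * t) := abs_of_nonpos (by linarith)
    have hexp : Real.exp (2 * x0 t x) ≤ Real.exp (-2 * |x - lm * t|) := by
      apply Real.exp_le_exp.2; rw [habs]; linarith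
    have hsum : 2 * um ≤ Real.sqrt (w0 (x0 t x) / 3) + Real.sqrt (lm / 3) := by
      have h1 : um ≤ Real.sqrt (w0 (x0 t x) / 3) := by
        rw [humq]; exact Real.sqrt_le_sqrt (by linarith)
      linarith [humq.le]
    have hmain : uR t x - um ≤ (w0 (x0 t x) / 3 - lm / 3) / (2 * um) := by
      have h := sqrt_sub_le_div (a := w0 (x0 t x) / 3) (b := lm / 3)
        (by linarith) (by linarith) (by positivity) hsum
      rw [← humq, ← huR t x] at h
      exact h
    have hbound : (w0 (x0 t x) / 3 - lm / 3) / (2 * um) ≤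
        (up + um) / (2 * um) * dR * Real.exp (2 * x0 t x) := by
      rw [div_le_iff₀ (by positivity : (0:ℝ) < 2 * um)]
      have hrw : (up + um) / (2 * um) * dR * Real.exp (2 * x0 t x) * (2 * um)
          = (up + um) * dR * Real.exp (2 * x0 t x) := by
        field_simp
      rw [hrw]
      have hw := hw0 (x0 t x)
      have h1t := one_add_tanh_le (x0 t x)
      have hfac : lp - lm = 3 * (up + um) * dR := by rw [hlp, hlm, hdR]; ring
      have e1 : w0 (x0 t x) - lm = (lp - lm) / 2 * (1 + Real.tanh (x0 t x)) := by
        rw [hw]; ring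
      have e2 : (lp - lm) / 2 * (1 + Real.tanh (x0 t x)) ≤
          (lp - lm) / 2 * (2 * Real.exp (2 * x0 t x)) :=
        mul_le_mul_of_nonneg_left h1t (by linarith)
      have e3 : (lp - lm) / 2 * (2 * Real.exp (2 * x0 t x)) =
          3 * (up + um) * dR * Real.exp (2 * x0 t x) := by rw [hfac]; ring
      linarith
    have step1 : |uR t x - um| = uR t x - um := abs_of_nonneg (by linarith [huRlb x])
    have step2 : (up + um) / (2 * um) * dR * Real.exp (2 * x0 t x) ≤
        (up + um) / (2 * um) * dR * Real.exp (-2 * |x - lm * t|) :=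
      mul_le_mul_of_nonneg_left hexp (by positivity)
    rw [step1]
    exact (hmain.trans hbound).trans step2
end

section
/- Algebraic–exponential decay of the approximate rarefaction wave outside the fan (Lemma 2.2, part (5)): For every ε ∈ (0,1) there exists a positive constant C_ε such that for all t ≥ 1: |u^R(t,x) − u_+| ≤ C_ε δ_R^{2ε/(2+ε)} t^{−1+ε} e^{−ε|x − λ_+ t|} for all x ≥ λ_+ t, and |u^R(t,x) − u_m| ≤ C_ε δ_R^{2ε/(2+ε)} t^{−1+ε} e^{−ε|x − λ_m t|} for all x ≤ λ_m t. -/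
private lemma aux1 (y : ℝ) (hy : 0 ≤ y) :
    Real.exp (-(2 * y)) ≤ 1 - Real.tanh y := by
  have hc := Real.cosh_pos y
  have hkey : (1 - Real.tanh y) * Real.cosh y = Real.exp (-y) := by
    rw [Real.tanh_eq_sinh_div_cosh, sub_mul, div_mul_cancel₀ _ (ne_of_gt hc), one_mul]
    exact Real.cosh_sub_sinh y
  have hle : Real.cosh y ≤ Real.exp y := by
    rw [Real.cosh_eq]
    have h1 : Real.exp (-y) ≤ Real.exp y := Real.exp_le_exp.2 (by linarith)
    linarith
  have hmul : Real.exp (-(2 * y)) * Real.exp y = Real.exp (-y) := by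
    rw [← Real.exp_add]; congr 1; ring
  nlinarith [Real.exp_pos y, Real.exp_pos (-(2 * y)),
    mul_le_mul_of_nonneg_left hle (Real.exp_pos (-(2 * y))).le]

private lemma aux2 (y : ℝ) (hy : 0 ≤ y) :
    1 - Real.tanh y ≤ 2 * Real.exp (-(2 * y)) := by
  have hc := Real.cosh_pos y
  have hkey : (1 - Real.tanh y) * Real.cosh y = Real.exp (-y) := by
    rw [Real.tanh_eq_sinh_div_cosh, sub_mul, div_mul_cancel₀ _ (ne_of_gt hc), one_mul]
    exact Real.cosh_sub_sinh y
  have hge : Real.exp y ≤ 2 * Real.cosh y := by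
    rw [Real.cosh_eq]
    have := (Real.exp_pos (-y)).le
    linarith
  have hmul : Real.exp (-(2 * y)) * Real.exp y = Real.exp (-y) := by
    rw [← Real.exp_add]; congr 1; ring
  nlinarith [Real.exp_pos y, Real.exp_pos (-(2 * y)),
    mul_le_mul_of_nonneg_left hge (Real.exp_pos (-(2 * y))).le]

private lemma ulem (um up uv w E : ℝ) (h0 : 0 < um) (hub : uv ≤ up) (hlb : um ≤ uv)
    (hsq : uv ^ 2 = w / 3) (hwe : 3 * up ^ 2 - w ≤ E) :
    (up - uv) * (3 * um) ≤ E := by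
  nlinarith [mul_nonneg (sub_nonneg.2 hub) (by linarith : (0:ℝ) ≤ up + uv - um)]

private lemma ulem2 (um uv w E : ℝ) (h0 : 0 < um) (hlb : um ≤ uv)
    (hsq : uv ^ 2 = w / 3) (hwe : w - 3 * um ^ 2 ≤ E) :
    (uv - um) * (3 * um) ≤ E := by
  nlinarith [mul_nonneg (sub_nonneg.2 hlb) (h0.le.trans hlb)]

private lemma key_decay (ε c : ℝ) (hε0 : 0 < ε) (hε1 : ε < 1) (hc : 0 < c) :
    ∃ K > 0, ∀ t b d : ℝ, 1 ≤ t → 0 ≤ b → 0 ≤ d → d ≤ b →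
      c * t ≤ b * Real.exp (2 * b) →
      Real.exp (-(2 * b)) ≤ K * t ^ (-1 + ε) * Real.exp (-ε * d) := by
  have h2ε : (0:ℝ) < 2 + ε := by linarith
  set s : ℝ := (2 - ε) / (2 + ε) with hs
  have hs0 : 0 ≤ s := div_nonneg (by linarith) h2ε.le
  have hεc : 0 < ε * c := mul_pos hε0 hc
  refine ⟨(ε * c) ^ (-s), Real.rpow_pos_of_pos hεc _, ?_⟩
  intro t b d ht hb hd hdb hbt
  have ht0 : (0:ℝ) < t := lt_of_lt_of_le one_pos ht
  have h1 : ε * c * t ≤ Real.exp ((2 + ε) * b) := by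
    have h2 : ε * b ≤ Real.exp (ε * b) := by
      nlinarith [Real.add_one_le_exp (ε * b)]
    calc ε * c * t = ε * (c * t) := by ring
      _ ≤ ε * (b * Real.exp (2 * b)) := mul_le_mul_of_nonneg_left hbt hε0.le
      _ = (ε * b) * Real.exp (2 * b) := by ring
      _ ≤ Real.exp (ε * b) * Real.exp (2 * b) :=
          mul_le_mul_of_nonneg_right h2 (Real.exp_pos _).le
      _ = Real.exp ((2 + ε) * b) := by rw [← Real.exp_add]; congr 1; ring
  have hεct : 0 < ε * c * t := mul_pos hεc ht0
  have h6 : (ε * c * t) ^ s ≤ Real.exp ((2 - ε) * b) := by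
    calc (ε * c * t) ^ s ≤ (Real.exp ((2 + ε) * b)) ^ s :=
          Real.rpow_le_rpow hεct.le h1 hs0
      _ = Real.exp ((2 + ε) * b * s) := by rw [← Real.exp_mul]
      _ = Real.exp ((2 - ε) * b) := by
          congr 1
          rw [hs]
          field_simp
  have h7 : Real.exp (-((2 - ε) * b)) ≤ (ε * c * t) ^ (-s) := by
    rw [Real.exp_neg, Real.rpow_neg hεct.le]
    exact inv_anti₀ (Real.rpow_pos_of_pos hεct _) h6
  have hexple : -s ≤ -1 + ε := by
    have h' : 1 - ε ≤ s := by
      rw [hs, le_div_iff₀ h2ε]; nlinarith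
    linarith
  have h8 : (ε * c * t) ^ (-s) ≤ (ε * c) ^ (-s) * t ^ (-1 + ε) := by
    rw [Real.mul_rpow hεc.le ht0.le]
    exact mul_le_mul_of_nonneg_left (Real.rpow_le_rpow_of_exponent_le ht hexple)
      (Real.rpow_pos_of_pos hεc _).le
  have h9 : Real.exp (-ε * b) ≤ Real.exp (-ε * d) :=
    Real.exp_le_exp.2 (by nlinarith)
  have h10 : Real.exp (-(2 * b)) = Real.exp (-((2 - ε) * b)) * Real.exp (-ε * b) := by
    rw [← Real.exp_add]; congr 1; ring
  rw [h10]
  calc Real.exp (-((2 - ε) * b)) * Real.exp (-ε * b)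
      ≤ ((ε * c) ^ (-s) * t ^ (-1 + ε)) * Real.exp (-ε * d) := by
        apply mul_le_mul (h7.trans h8) h9 (Real.exp_pos _).le
        positivity
    _ = (ε * c) ^ (-s) * t ^ (-1 + ε) * Real.exp (-ε * d) := by ring

set_option maxHeartbeats 1000000 in
/-- Algebraic–exponential decay of the approximate rarefaction wave outside the fan
(Lemma 2.2, part (5)). -/
theorem rarefaction_outside_fan_decay
    (um up lm lp dR : ℝ) (h0 : 0 < um) (hup : um < up)
    (hlm : lm = 3 * um ^ 2) (hlp : lp = 3 * up ^ 2) (hdR : dR = up - um)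
    (w0 : ℝ → ℝ) (hw0 : ∀ x, w0 x = (lp + lm) / 2 + (lp - lm) / 2 * Real.tanh x)
    (x0 : ℝ → ℝ → ℝ) (hx0 : ∀ t, 0 ≤ t → ∀ x, x = x0 t x + w0 (x0 t x) * t)
    (uR : ℝ → ℝ → ℝ) (huR : ∀ t x, uR t x = Real.sqrt (w0 (x0 t x) / 3)) :
    ∀ ε : ℝ, 0 < ε → ε < 1 → ∃ C > 0, ∀ t : ℝ, 1 ≤ t →
      (∀ x : ℝ, lp * t ≤ x →
        |uR t x - up| ≤ C * dR ^ (2 * ε / (2 + ε)) * t ^ (-1 + ε) * Real.exp (-ε * |x - lp * t|)) ∧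
      (∀ x : ℝ, x ≤ lm * t →
        |uR t x - um| ≤ C * dR ^ (2 * ε / (2 + ε)) * t ^ (-1 + ε) * Real.exp (-ε * |x - lm * t|)) := by
  intro ε hε0 hε1
  have hup0 : 0 < up := h0.trans hup
  have hlpm : 0 < lp - lm := by rw [hlp, hlm]; nlinarith
  have hdR0 : 0 < dR := by rw [hdR]; linarith
  set c : ℝ := (lp - lm) / 2 with hcdef
  have hc : 0 < c := by positivity
  obtain ⟨K, hK, hKey⟩ := key_decay ε c hε0 hε1 hc
  set B : ℝ := (lp - lm) / (3 * um) with hBdef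
  have hB : 0 < B := by positivity
  set θ : ℝ := 2 * ε / (2 + ε) with hθdef
  have hdRθ : 0 < dR ^ θ := Real.rpow_pos_of_pos hdR0 _
  refine ⟨B * K / dR ^ θ, by positivity, ?_⟩
  have hCd : B * K / dR ^ θ * dR ^ θ = B * K := div_mul_cancel₀ _ (ne_of_gt hdRθ)
  intro t ht
  have ht0 : (0:ℝ) ≤ t := by linarith
  constructor
  · -- right case
    intro x hx
    set a : ℝ := x0 t x with hadef
    have hxa : x = a + w0 a * t := hx0 t ht0 x
    have hwa : w0 a = (lp + lm) / 2 + (lp - lm) / 2 * Real.tanh a := hw0 a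
    have htanh1 : Real.tanh a < 1 := tanh_lt_one' a
    have htanh2 : -1 < Real.tanh a := neg_one_lt_tanh' a
    have hwlt : w0 a < lp := by
      have := mul_lt_mul_of_pos_left htanh1 hc
      rw [hwa]; rw [hcdef] at this; linarith
    have hwgt : lm < w0 a := by
      have := mul_lt_mul_of_pos_left htanh2 hc
      rw [hwa]; rw [hcdef] at this; linarith
    have hdiff : a - (lp - w0 a) * t = x - lp * t := by rw [hxa]; ring
    have hwt : 0 ≤ (lp - w0 a) * t := mul_nonneg (by linarith) ht0
    have ha0 : 0 ≤ a := by linarith [hdiff, hwt, hx]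
    have hdle : x - lp * t ≤ a := by linarith [hdiff, hwt]
    have h1a := aux1 a ha0
    have h2a := aux2 a ha0
    have hexp2 : Real.exp (-(2 * a)) * Real.exp (2 * a) = 1 := by
      rw [← Real.exp_add]; simp
    have hbt : c * t ≤ a * Real.exp (2 * a) := by
      have hineq : c * Real.exp (-(2 * a)) * t ≤ a := by
        have hw2 : c * (1 - Real.tanh a) * t = (lp - w0 a) * t := by
          rw [hwa, hcdef]; ring
        have hh := mul_le_mul_of_nonneg_right (mul_le_mul_of_nonneg_left h1a hc.le) ht0
        linarith [hh, hw2, hdiff, hx]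
      have h2 := mul_le_mul_of_nonneg_right hineq (Real.exp_pos (2 * a)).le
      calc c * t = c * Real.exp (-(2 * a)) * t * Real.exp (2 * a) := by
            rw [show c * Real.exp (-(2 * a)) * t * Real.exp (2 * a)
                = c * t * (Real.exp (-(2 * a)) * Real.exp (2 * a)) by ring, hexp2, mul_one]
        _ ≤ a * Real.exp (2 * a) := h2
    -- u bounds
    have hwlo : um ^ 2 ≤ w0 a / 3 := by rw [hlm] at hwgt; linarith
    have hwhi : w0 a / 3 ≤ up ^ 2 := by rw [hlp] at hwlt; linarith
    have huRx : uR t x = Real.sqrt (w0 a / 3) := huR t x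
    have huRlb : um ≤ uR t x := by
      rw [huRx, show um = Real.sqrt (um ^ 2) by rw [Real.sqrt_sq h0.le]]
      exact Real.sqrt_le_sqrt hwlo
    have huRub : uR t x ≤ up := by
      rw [huRx, show up = Real.sqrt (up ^ 2) by rw [Real.sqrt_sq hup0.le]]
      exact Real.sqrt_le_sqrt hwhi
    have huRsq : (uR t x) ^ 2 = w0 a / 3 := by
      rw [huRx, Real.sq_sqrt (le_trans (by positivity : (0:ℝ) ≤ um ^ 2) hwlo)]
    have habs : |uR t x - up| = up - uR t x := by
      rw [abs_of_nonpos (by linarith)]; ring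
    have hwe : 3 * up ^ 2 - w0 a ≤ (lp - lm) * Real.exp (-(2 * a)) := by
      have e1 : lp - w0 a = c * (1 - Real.tanh a) := by rw [hwa, hcdef]; ring
      have e2 : c * (2 * Real.exp (-(2 * a))) = (lp - lm) * Real.exp (-(2 * a)) := by
        rw [hcdef]; ring
      have e3 := mul_le_mul_of_nonneg_left h2a hc.le
      linarith [hlp, e1, e2, e3]
    have bound1 : |uR t x - up| ≤ B * Real.exp (-(2 * a)) := by
      rw [habs, hBdef, div_mul_eq_mul_div, le_div_iff₀ (by positivity : (0:ℝ) < 3 * um)]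
      exact ulem um up (uR t x) (w0 a) _ h0 huRub huRlb huRsq hwe
    have hd0 : (0:ℝ) ≤ |x - lp * t| := abs_nonneg _
    have hdabs : |x - lp * t| = x - lp * t := abs_of_nonneg (by linarith)
    have hkey := hKey t a |x - lp * t| ht ha0 hd0 (by rw [hdabs]; exact hdle) hbt
    calc |uR t x - up| ≤ B * Real.exp (-(2 * a)) := bound1
      _ ≤ B * (K * t ^ (-1 + ε) * Real.exp (-ε * |x - lp * t|)) :=
          mul_le_mul_of_nonneg_left hkey hB.le
      _ = B * K / dR ^ θ * dR ^ θ * t ^ (-1 + ε) * Real.exp (-ε * |x - lp * t|) := by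
          rw [hCd]; ring
  · -- left case
    intro x hx
    set a : ℝ := x0 t x with hadef
    have hxa : x = a + w0 a * t := hx0 t ht0 x
    have hwa : w0 a = (lp + lm) / 2 + (lp - lm) / 2 * Real.tanh a := hw0 a
    have htanh1 : Real.tanh a < 1 := tanh_lt_one' a
    have htanh2 : -1 < Real.tanh a := neg_one_lt_tanh' a
    have hwlt : w0 a < lp := by
      have := mul_lt_mul_of_pos_left htanh1 hc
      rw [hwa]; rw [hcdef] at this; linarith
    have hwgt : lm < w0 a := by
      have := mul_lt_mul_of_pos_left htanh2 hc
      rw [hwa]; rw [hcdef] at this; linarith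
    have hdiff : lm * t - x = (-a) - (w0 a - lm) * t := by rw [hxa]; ring
    have hwt : 0 ≤ (w0 a - lm) * t := mul_nonneg (by linarith) ht0
    have ha0 : 0 ≤ -a := by linarith [hdiff, hwt, hx]
    have hdle : lm * t - x ≤ -a := by linarith [hdiff, hwt]
    have h1a' := aux1 (-a) ha0
    have h2a' := aux2 (-a) ha0
    have h1a : Real.exp (-(2 * -a)) ≤ 1 + Real.tanh a := by
      rwa [Real.tanh_neg, sub_neg_eq_add] at h1a'
    have h2a : 1 + Real.tanh a ≤ 2 * Real.exp (-(2 * -a)) := by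
      rwa [Real.tanh_neg, sub_neg_eq_add] at h2a'
    have hexp2 : Real.exp (-(2 * -a)) * Real.exp (2 * -a) = 1 := by
      rw [← Real.exp_add]; simp
    have hbt : c * t ≤ (-a) * Real.exp (2 * -a) := by
      have hineq : c * Real.exp (-(2 * -a)) * t ≤ -a := by
        have hw2 : c * (1 + Real.tanh a) * t = (w0 a - lm) * t := by
          rw [hwa, hcdef]; ring
        have hh := mul_le_mul_of_nonneg_right (mul_le_mul_of_nonneg_left h1a hc.le) ht0
        linarith [hh, hw2, hdiff, hx]
      have h2 := mul_le_mul_of_nonneg_right hineq (Real.exp_pos (2 * -a)).le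
      calc c * t = c * Real.exp (-(2 * -a)) * t * Real.exp (2 * -a) := by
            rw [show c * Real.exp (-(2 * -a)) * t * Real.exp (2 * -a)
                = c * t * (Real.exp (-(2 * -a)) * Real.exp (2 * -a)) by ring, hexp2, mul_one]
        _ ≤ (-a) * Real.exp (2 * -a) := h2
    have hwlo : um ^ 2 ≤ w0 a / 3 := by rw [hlm] at hwgt; linarith
    have hwhi : w0 a / 3 ≤ up ^ 2 := by rw [hlp] at hwlt; linarith
    have huRx : uR t x = Real.sqrt (w0 a / 3) := huR t x
    have huRlb : um ≤ uR t x := by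
      rw [huRx, show um = Real.sqrt (um ^ 2) by rw [Real.sqrt_sq h0.le]]
      exact Real.sqrt_le_sqrt hwlo
    have huRub : uR t x ≤ up := by
      rw [huRx, show up = Real.sqrt (up ^ 2) by rw [Real.sqrt_sq hup0.le]]
      exact Real.sqrt_le_sqrt hwhi
    have huRsq : (uR t x) ^ 2 = w0 a / 3 := by
      rw [huRx, Real.sq_sqrt (le_trans (by positivity : (0:ℝ) ≤ um ^ 2) hwlo)]
    have habs : |uR t x - um| = uR t x - um := abs_of_nonneg (by linarith)
    have hwe : w0 a - 3 * um ^ 2 ≤ (lp - lm) * Real.exp (-(2 * -a)) := by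
      have e1 : w0 a - lm = c * (1 + Real.tanh a) := by rw [hwa, hcdef]; ring
      have e2 : c * (2 * Real.exp (-(2 * -a))) = (lp - lm) * Real.exp (-(2 * -a)) := by
        rw [hcdef]; ring
      have e3 := mul_le_mul_of_nonneg_left h2a hc.le
      linarith [hlm, e1, e2, e3]
    have bound1 : |uR t x - um| ≤ B * Real.exp (-(2 * -a)) := by
      rw [habs, hBdef, div_mul_eq_mul_div, le_div_iff₀ (by positivity : (0:ℝ) < 3 * um)]
      exact ulem2 um (uR t x) (w0 a) _ h0 huRlb huRsq hwe
    have hd0 : (0:ℝ) ≤ |x - lm * t| := abs_nonneg _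
    have hdabs : |x - lm * t| = lm * t - x := by
      rw [abs_of_nonpos (by linarith)]; ring
    have hkey := hKey t (-a) |x - lm * t| ht ha0 hd0 (by rw [hdabs]; exact hdle) hbt
    calc |uR t x - um| ≤ B * Real.exp (-(2 * -a)) := bound1
      _ ≤ B * (K * t ^ (-1 + ε) * Real.exp (-ε * |x - lm * t|)) :=
          mul_le_mul_of_nonneg_left hkey hB.le
      _ = B * K / dR ^ θ * dR ^ θ * t ^ (-1 + ε) * Real.exp (-ε * |x - lm * t|) := by
          rw [hCd]; ring
end

section
/- Regularity and bounds for the weight function: The piecewise-defined function w is twice continuously differentiable on (u_-, u_m) (in particular the one-sided values of w, w′, w″ match at s = 0 and at s = u_m/2), and for all s ∈ (u_-, u_m): (15/8)u_m² ≤ w(s) < (15/2)u_m², −(5/2)u_m ≤ w′(s) ≤ 0, and 0 ≤ w″(s) ≤ 15/2. -/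
open Set Filter Topology

lemma glue_hasDerivAt {F f g : ℝ → ℝ} {x d : ℝ}
    (hf : HasDerivAt f d x) (hg : HasDerivAt g d x)
    (hl : ∀ᶠ y in 𝓝[Set.Iic x] x, F y = f y)
    (hr : ∀ᶠ y in 𝓝[Set.Ici x] x, F y = g y)
    (hxf : F x = f x) (hxg : F x = g x) : HasDerivAt F d x := by
  have h1 : HasDerivWithinAt F d (Set.Iic x) x :=
    (hf.hasDerivWithinAt).congr_of_eventuallyEq hl hxf
  have h2 : HasDerivWithinAt F d (Set.Ici x) x :=
    (hg.hasDerivWithinAt).congr_of_eventuallyEq hr hxg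
  have h3 := h1.union h2
  rw [Set.Iic_union_Ici] at h3
  exact hasDerivWithinAt_univ.mp h3

/-- Regularity and bounds for the weight function. -/
theorem weight_regularity
    (um : ℝ) (hum : 0 < um)
    (w : ℝ → ℝ)
    (hw : ∀ s, w s = if s < 0 then (5 / 2) * um * (um - s)
        else if s < um / 2 then (5 / (2 * um ^ 2)) * (um - s) * (4 * s ^ 3 + um ^ 3)
        else (15 / 8) * um ^ 2) :
    ContDiffOn ℝ 2 w (Set.Ioo (-2 * um) um) ∧
    ∀ s ∈ Set.Ioo (-2 * um) um,
      (15 / 8) * um ^ 2 ≤ w s ∧ w s < (15 / 2) * um ^ 2 ∧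
      -((5 / 2) * um) ≤ deriv w s ∧ deriv w s ≤ 0 ∧
      0 ≤ deriv (deriv w) s ∧ deriv (deriv w) s ≤ 15 / 2 := by
  have hum0 : um ≠ 0 := ne_of_gt hum
  have humh : (0:ℝ) < um / 2 := by linarith
  set W1 : ℝ → ℝ := fun t => if t < 0 then -(5 / 2 * um)
      else if t < um / 2 then 5 / (2 * um ^ 2) * (12 * um * t ^ 2 - 16 * t ^ 3 - um ^ 3)
      else 0 with hW1def
  set W2 : ℝ → ℝ := fun t => if t < 0 then 0
      else if t < um / 2 then 5 / (2 * um ^ 2) * (24 * um * t - 48 * t ^ 2)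
      else 0 with hW2def
  -- piecewise descriptions of w
  have hwp : ∀ y : ℝ, y ≤ 0 → w y = 5 / 2 * um * (um - y) := by
    intro y hy
    rcases lt_or_eq_of_le hy with h | h
    · rw [hw, if_pos h]
    · subst h
      rw [hw, if_neg (lt_irrefl _), if_pos humh]
      field_simp
      ring
  have hwq : ∀ y : ℝ, 0 ≤ y → y ≤ um / 2 →
      w y = 5 / (2 * um ^ 2) * (um - y) * (4 * y ^ 3 + um ^ 3) := by
    intro y h0 h1
    rcases lt_or_eq_of_le h1 with h | h
    · rw [hw, if_neg (not_lt.mpr h0), if_pos h]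
    · subst h
      rw [hw, if_neg (not_lt.mpr h0), if_neg (lt_irrefl _)]
      field_simp
      ring
  have hwr : ∀ y : ℝ, um / 2 ≤ y → w y = 15 / 8 * um ^ 2 := by
    intro y hy
    rw [hw, if_neg (by linarith : ¬ y < 0), if_neg (not_lt.mpr hy)]
  -- piecewise descriptions of W1
  have hW1p : ∀ y : ℝ, y ≤ 0 → W1 y = -(5 / 2 * um) := by
    intro y hy
    simp only [hW1def]
    rcases lt_or_eq_of_le hy with h | h
    · rw [if_pos h]
    · subst h
      rw [if_neg (lt_irrefl _), if_pos humh]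
      field_simp
      ring
  have hW1q : ∀ y : ℝ, 0 ≤ y → y ≤ um / 2 →
      W1 y = 5 / (2 * um ^ 2) * (12 * um * y ^ 2 - 16 * y ^ 3 - um ^ 3) := by
    intro y h0 h1
    simp only [hW1def]
    rcases lt_or_eq_of_le h1 with h | h
    · rw [if_neg (not_lt.mpr h0), if_pos h]
    · subst h
      rw [if_neg (not_lt.mpr h0), if_neg (lt_irrefl _)]
      have : 12 * um * (um / 2) ^ 2 - 16 * (um / 2) ^ 3 - um ^ 3 = 0 := by ring
      rw [this, mul_zero]
  have hW1r : ∀ y : ℝ, um / 2 ≤ y → W1 y = 0 := by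
    intro y hy
    simp only [hW1def]
    rw [if_neg (by linarith : ¬ y < 0), if_neg (not_lt.mpr hy)]
  -- piecewise descriptions of W2
  have hW2p : ∀ y : ℝ, y ≤ 0 → W2 y = 0 := by
    intro y hy
    simp only [hW2def]
    rcases lt_or_eq_of_le hy with h | h
    · rw [if_pos h]
    · subst h
      rw [if_neg (lt_irrefl _), if_pos humh]
      have : 24 * um * (0:ℝ) - 48 * (0:ℝ) ^ 2 = 0 := by ring
      rw [this, mul_zero]
  have hW2q : ∀ y : ℝ, 0 ≤ y → y ≤ um / 2 →
      W2 y = 5 / (2 * um ^ 2) * (24 * um * y - 48 * y ^ 2) := by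
    intro y h0 h1
    simp only [hW2def]
    rcases lt_or_eq_of_le h1 with h | h
    · rw [if_neg (not_lt.mpr h0), if_pos h]
    · subst h
      rw [if_neg (not_lt.mpr h0), if_neg (lt_irrefl _)]
      have : 24 * um * (um / 2) - 48 * (um / 2) ^ 2 = 0 := by ring
      rw [this, mul_zero]
  have hW2r : ∀ y : ℝ, um / 2 ≤ y → W2 y = 0 := by
    intro y hy
    simp only [hW2def]
    rw [if_neg (by linarith : ¬ y < 0), if_neg (not_lt.mpr hy)]
  -- derivatives of the pieces
  have hp : ∀ s : ℝ, HasDerivAt (fun x : ℝ => 5 / 2 * um * (um - x)) (-(5 / 2 * um)) s := by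
    intro s
    have h := ((hasDerivAt_id s).const_sub um).const_mul (5 / 2 * um)
    refine h.congr_deriv ?_
    ring
  have hq : ∀ s : ℝ, HasDerivAt (fun x : ℝ => 5 / (2 * um ^ 2) * (um - x) * (4 * x ^ 3 + um ^ 3))
      (5 / (2 * um ^ 2) * (12 * um * s ^ 2 - 16 * s ^ 3 - um ^ 3)) s := by
    intro s
    have h := (((hasDerivAt_id s).const_sub um).const_mul (5 / (2 * um ^ 2))).mul
      (((hasDerivAt_pow 3 s).const_mul 4).add_const (um ^ 3))
    refine h.congr_deriv ?_
    simp only [id_eq]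
    push_cast
    ring
  have hm : ∀ s : ℝ, HasDerivAt
      (fun x : ℝ => 5 / (2 * um ^ 2) * (12 * um * x ^ 2 - 16 * x ^ 3 - um ^ 3))
      (5 / (2 * um ^ 2) * (24 * um * s - 48 * s ^ 2)) s := by
    intro s
    have h := ((((hasDerivAt_pow 2 s).const_mul (12 * um)).sub
      ((hasDerivAt_pow 3 s).const_mul 16)).sub_const (um ^ 3)).const_mul (5 / (2 * um ^ 2))
    refine h.congr_deriv ?_
    push_cast
    ring
  -- first derivative of w
  have H1 : ∀ s : ℝ, HasDerivAt w (W1 s) s := by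
    intro s
    rcases lt_trichotomy s 0 with h | h | h
    · rw [hW1p s h.le]
      exact (hp s).congr_of_eventuallyEq (by
        filter_upwards [Iio_mem_nhds h] with y hy using hwp y (le_of_lt hy))
    · subst h
      rw [hW1p 0 le_rfl]
      have hq0 : HasDerivAt (fun x : ℝ => 5 / (2 * um ^ 2) * (um - x) * (4 * x ^ 3 + um ^ 3))
          (-(5 / 2 * um)) 0 := by
        convert hq 0 using 1
        field_simp
        ring
      refine glue_hasDerivAt (hp 0) hq0 ?_ ?_ (hwp 0 le_rfl) (hwq 0 le_rfl humh.le)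
      · filter_upwards [self_mem_nhdsWithin] with y hy using hwp y hy
      · filter_upwards [mem_nhdsWithin_of_mem_nhds (Iio_mem_nhds humh), self_mem_nhdsWithin]
          with y h1 h2
        exact hwq y h2 (le_of_lt h1)
    · rcases lt_trichotomy s (um / 2) with h2 | h2 | h2
      · rw [hW1q s h.le h2.le]
        exact (hq s).congr_of_eventuallyEq (by
          filter_upwards [Ioo_mem_nhds h h2] with y hy using hwq y hy.1.le hy.2.le)
      · subst h2
        rw [hW1r _ le_rfl]
        have hql : HasDerivAt (fun x : ℝ => 5 / (2 * um ^ 2) * (um - x) * (4 * x ^ 3 + um ^ 3))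
            0 (um / 2) := by
          convert hq (um / 2) using 1
          have : 12 * um * (um / 2) ^ 2 - 16 * (um / 2) ^ 3 - um ^ 3 = 0 := by ring
          rw [this, mul_zero]
        refine glue_hasDerivAt hql (hasDerivAt_const (um / 2) (15 / 8 * um ^ 2)) ?_ ?_
          (hwq _ humh.le le_rfl) (hwr _ le_rfl)
        · filter_upwards [mem_nhdsWithin_of_mem_nhds (Ioi_mem_nhds h), self_mem_nhdsWithin]
            with y h1 h2
          exact hwq y (le_of_lt h1) h2
        · filter_upwards [self_mem_nhdsWithin] with y hy using hwr y hy
      · rw [hW1r s h2.le]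
        exact (hasDerivAt_const s (15 / 8 * um ^ 2)).congr_of_eventuallyEq (by
          filter_upwards [Ioi_mem_nhds h2] with y hy using hwr y hy.le)
  -- second derivative of w
  have H2 : ∀ s : ℝ, HasDerivAt W1 (W2 s) s := by
    intro s
    rcases lt_trichotomy s 0 with h | h | h
    · rw [hW2p s h.le]
      exact (hasDerivAt_const s (-(5 / 2 * um))).congr_of_eventuallyEq (by
        filter_upwards [Iio_mem_nhds h] with y hy using hW1p y (le_of_lt hy))
    · subst h
      rw [hW2p 0 le_rfl]
      have hm0 : HasDerivAt
          (fun x : ℝ => 5 / (2 * um ^ 2) * (12 * um * x ^ 2 - 16 * x ^ 3 - um ^ 3)) 0 0 := by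
        convert hm 0 using 1
        have : 24 * um * (0:ℝ) - 48 * (0:ℝ) ^ 2 = 0 := by ring
        rw [this, mul_zero]
      refine glue_hasDerivAt (hasDerivAt_const 0 (-(5 / 2 * um))) hm0 ?_ ?_
        (hW1p 0 le_rfl) (hW1q 0 le_rfl humh.le)
      · filter_upwards [self_mem_nhdsWithin] with y hy using hW1p y hy
      · filter_upwards [mem_nhdsWithin_of_mem_nhds (Iio_mem_nhds humh), self_mem_nhdsWithin]
          with y h1 h2
        exact hW1q y h2 (le_of_lt h1)
    · rcases lt_trichotomy s (um / 2) with h2 | h2 | h2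
      · rw [hW2q s h.le h2.le]
        exact (hm s).congr_of_eventuallyEq (by
          filter_upwards [Ioo_mem_nhds h h2] with y hy using hW1q y hy.1.le hy.2.le)
      · subst h2
        rw [hW2r _ le_rfl]
        have hml : HasDerivAt
            (fun x : ℝ => 5 / (2 * um ^ 2) * (12 * um * x ^ 2 - 16 * x ^ 3 - um ^ 3)) 0
            (um / 2) := by
          convert hm (um / 2) using 1
          have : 24 * um * (um / 2) - 48 * (um / 2) ^ 2 = 0 := by ring
          rw [this, mul_zero]
        refine glue_hasDerivAt hml (hasDerivAt_const (um / 2) (0:ℝ)) ?_ ?_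
          (hW1q _ humh.le le_rfl) (hW1r _ le_rfl)
        · filter_upwards [mem_nhdsWithin_of_mem_nhds (Ioi_mem_nhds h), self_mem_nhdsWithin]
            with y h1 h2
          exact hW1q y (le_of_lt h1) h2
        · filter_upwards [self_mem_nhdsWithin] with y hy using hW1r y hy
      · rw [hW2r s h2.le]
        exact (hasDerivAt_const s (0:ℝ)).congr_of_eventuallyEq (by
          filter_upwards [Ioi_mem_nhds h2] with y hy using hW1r y hy.le)
  have hdw : deriv w = W1 := funext fun s => (H1 s).deriv
  have hdW1 : deriv W1 = W2 := funext fun s => (H2 s).deriv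
  -- continuity of W2
  have hcW2 : Continuous W2 := by
    have hrep : W2 = fun y => 5 / (2 * um ^ 2) *
        (24 * um * (min (max y 0) (um / 2)) - 48 * (min (max y 0) (um / 2)) ^ 2) := by
      funext y
      rcases lt_or_ge y 0 with h | h
      · rw [hW2p y h.le, max_eq_right h.le, min_eq_left humh.le]
        ring
      · rcases lt_or_ge y (um / 2) with h2 | h2
        · rw [hW2q y h h2.le, max_eq_left h, min_eq_left h2.le]
        · rw [hW2r y h2, max_eq_left (h.trans (le_refl y)), min_eq_right h2]
          have : 24 * um * (um / 2) - 48 * (um / 2) ^ 2 = 0 := by ring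
          rw [this, mul_zero]
    rw [hrep]
    fun_prop
  have hcd : ContDiff ℝ 2 w := by
    have hc1 : ContDiff ℝ 1 (deriv w) := by
      rw [hdw, contDiff_one_iff_deriv]
      exact ⟨fun s => (H2 s).differentiableAt, by rw [hdW1]; exact hcW2⟩
    rw [show (2 : WithTop ℕ∞) = 1 + 1 from by norm_num, contDiff_succ_iff_deriv]
    exact ⟨fun s => (H1 s).differentiableAt, by simp, hc1⟩
  refine ⟨hcd.contDiffOn, ?_⟩
  intro s hs
  obtain ⟨hsl, hsr⟩ := hs
  rw [hw s, hdw, hdW1]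
  simp only [hW1def, hW2def]
  split_ifs with h1 h2
  · refine ⟨?_, ?_, le_refl _, by linarith, le_refl _, by norm_num⟩
    · nlinarith [mul_pos hum (show (0:ℝ) < um / 4 - s by linarith)]
    · nlinarith [mul_pos hum (show (0:ℝ) < s + 2 * um by linarith)]
  · have h0 : (0:ℝ) ≤ s := not_lt.mp h1
    have hden : (0:ℝ) < 2 * um ^ 2 := by positivity
    refine ⟨?_, ?_, ?_, ?_, ?_, ?_⟩
    · rw [show (5 / (2 * um ^ 2) * (um - s) * (4 * s ^ 3 + um ^ 3) : ℝ)
          = 5 * ((um - s) * (4 * s ^ 3 + um ^ 3)) / (2 * um ^ 2) from by ring, le_div_iff₀ hden]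
      nlinarith [mul_nonneg (mul_nonneg (sq_nonneg (2 * s - um))
        (show (0:ℝ) ≤ um - 2 * s by linarith)) (show (0:ℝ) ≤ um + 2 * s by linarith)]
    · rw [div_mul_eq_mul_div, div_mul_eq_mul_div, div_lt_iff₀ hden]
      have hin : (0:ℝ) ≤ um ^ 3 - 4 * um * s ^ 2 + 4 * s ^ 3 := by
        nlinarith [mul_nonneg (mul_nonneg hum.le (show (0:ℝ) ≤ um - 2 * s by linarith))
          (show (0:ℝ) ≤ um + 2 * s by linarith), pow_nonneg h0 3]
      nlinarith [mul_nonneg h0 hin, pow_pos hum 4]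
    · rw [show (5 / (2 * um ^ 2) * (12 * um * s ^ 2 - 16 * s ^ 3 - um ^ 3) : ℝ)
          = 5 * (12 * um * s ^ 2 - 16 * s ^ 3 - um ^ 3) / (2 * um ^ 2) from by ring, le_div_iff₀ hden]
      nlinarith [mul_nonneg (sq_nonneg s) (show (0:ℝ) ≤ 3 * um - 4 * s by linarith)]
    · rw [div_mul_eq_mul_div, div_le_iff₀ hden]
      nlinarith [mul_nonneg (sq_nonneg (2 * s - um)) (show (0:ℝ) ≤ 4 * s + um by linarith)]
    · apply mul_nonneg (by positivity)
      nlinarith [mul_nonneg h0 (show (0:ℝ) ≤ um - 2 * s by linarith)]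
    · rw [div_mul_eq_mul_div, div_le_iff₀ hden]
      nlinarith [sq_nonneg (um - 4 * s)]
  · refine ⟨le_refl _, ?_, by linarith, le_refl _, le_refl _, by norm_num⟩
    nlinarith [pow_pos hum 2]
end

section
/- Lower bound on the diffusion coefficient after the weighted Poincaré substitution: For all s ∈ (u_-, u_m/2), 1 − (2/(5u_m)) · w(s) · (u_m/2 − s)/(u_m − s)² > 1/6. In particular, for s ∈ (u_-, 0) the left-hand side equals (u_m/2)/(u_m − s) > 1/6, and for s ∈ [0, u_m/2) it equals (8s⁴ − 4u_m s³ + u_m⁴)/(2u_m³(u_m − s)) > 1/4. -/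
/-- Lower bound on the diffusion coefficient after the weighted Poincaré substitution. -/
theorem diffusion_coefficient_lower_bound
    (um : ℝ) (hum : 0 < um)
    (w : ℝ → ℝ)
    (hw : ∀ s, w s = if s < 0 then (5 / 2) * um * (um - s)
        else if s < um / 2 then (5 / (2 * um ^ 2)) * (um - s) * (4 * s ^ 3 + um ^ 3)
        else (15 / 8) * um ^ 2) :
    (∀ s : ℝ, -2 * um < s → s < um / 2 →
      1 / 6 < 1 - (2 / (5 * um)) * w s * (um / 2 - s) / (um - s) ^ 2) ∧
    (∀ s : ℝ, -2 * um < s → s < 0 →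
      1 - (2 / (5 * um)) * w s * (um / 2 - s) / (um - s) ^ 2 = (um / 2) / (um - s) ∧
      1 / 6 < (um / 2) / (um - s)) ∧
    (∀ s : ℝ, 0 ≤ s → s < um / 2 →
      1 - (2 / (5 * um)) * w s * (um / 2 - s) / (um - s) ^ 2
        = (8 * s ^ 4 - 4 * um * s ^ 3 + um ^ 4) / (2 * um ^ 3 * (um - s)) ∧
      1 / 4 < (8 * s ^ 4 - 4 * um * s ^ 3 + um ^ 4) / (2 * um ^ 3 * (um - s))) := by
  have part2 : ∀ s : ℝ, -2 * um < s → s < 0 →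
      1 - (2 / (5 * um)) * w s * (um / 2 - s) / (um - s) ^ 2 = (um / 2) / (um - s) ∧
      1 / 6 < (um / 2) / (um - s) := by
    intro s h1 h2
    have hus : 0 < um - s := by linarith
    have hw' : w s = (5 / 2) * um * (um - s) := by rw [hw s, if_pos h2]
    constructor
    · rw [hw']
      field_simp
      ring
    · rw [lt_div_iff₀ hus]
      linarith
  have part3 : ∀ s : ℝ, 0 ≤ s → s < um / 2 →
      1 - (2 / (5 * um)) * w s * (um / 2 - s) / (um - s) ^ 2
        = (8 * s ^ 4 - 4 * um * s ^ 3 + um ^ 4) / (2 * um ^ 3 * (um - s)) ∧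
      1 / 4 < (8 * s ^ 4 - 4 * um * s ^ 3 + um ^ 4) / (2 * um ^ 3 * (um - s)) := by
    intro s h1 h2
    have hus : 0 < um - s := by linarith
    have hw' : w s = (5 / (2 * um ^ 2)) * (um - s) * (4 * s ^ 3 + um ^ 3) := by
      rw [hw s, if_neg (not_lt.mpr h1), if_pos h2]
    constructor
    · rw [hw']
      field_simp
      ring
    · rw [lt_div_iff₀ (by positivity : (0:ℝ) < 2 * um ^ 3 * (um - s))]
      have key : 0 < 2 * um * ((um - 2 * s) * (um ^ 2 + 2 * um * s + 4 * s ^ 2)) := by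
        have h3 : 0 < um - 2 * s := by linarith
        have h4 : 0 < um ^ 2 + 2 * um * s + 4 * s ^ 2 := by positivity
        positivity
      nlinarith [key, sq_nonneg (s * s), mul_nonneg (mul_nonneg (mul_nonneg h1 h1) h1) hum.le,
        mul_nonneg h1 hum.le]
  refine ⟨?_, part2, part3⟩
  intro s h1 h2
  rcases lt_or_ge s 0 with h | h
  · obtain ⟨e, hlt⟩ := part2 s h1 h
    rw [e]; exact hlt
  · obtain ⟨e, hlt⟩ := part3 s h h2
    rw [e]; linarith
end

section
/- Coercivity of the zeroth-order coefficient in the a-contraction estimate: Fix u_m > 0. For all s ∈ [0, u_m/2), −(1800/u_m⁴)s⁸ + (400/u_m³)s⁷ + (3950/u_m²)s⁶ − (3225/u_m)s⁵ + (775/2)s⁴ + 325 u_m s³ − (75/2)u_m² s² − (25/8)u_m³ s + (25/8)u_m⁴ > 2u_m⁴. Moreover, for all s ∈ (−2u_m, 0), (25/8)u_m³(u_m − s) > 2u_m⁴. -/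
/-- Coercivity of the zeroth-order coefficient `H₁ + H₂` in the a-contraction estimate. -/
theorem coercivity_H1_add_H2
    (um : ℝ) (hum : 0 < um) :
    (∀ s : ℝ, 0 ≤ s → s < um / 2 →
      2 * um ^ 4 <
        -(1800 / um ^ 4) * s ^ 8 + (400 / um ^ 3) * s ^ 7 + (3950 / um ^ 2) * s ^ 6
          - (3225 / um) * s ^ 5 + (775 / 2) * s ^ 4 + 325 * um * s ^ 3
          - (75 / 2) * um ^ 2 * s ^ 2 - (25 / 8) * um ^ 3 * s + (25 / 8) * um ^ 4) ∧
    (∀ s : ℝ, -2 * um < s → s < 0 →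
      2 * um ^ 4 < (25 / 8) * um ^ 3 * (um - s)) := by
  constructor
  · intro s hs0 hs1
    have hu4 : (0:ℝ) < um ^ 4 := by positivity
    have hb : 0 < um - 2 * s := by linarith
    have key : (0:ℝ) < (-(1800 / um ^ 4) * s ^ 8 + (400 / um ^ 3) * s ^ 7 + (3950 / um ^ 2) * s ^ 6
          - (3225 / um) * s ^ 5 + (775 / 2) * s ^ 4 + 325 * um * s ^ 3
          - (75 / 2) * um ^ 2 * s ^ 2 - (25 / 8) * um ^ 3 * s + (25 / 8) * um ^ 4 - 2 * um ^ 4) * um ^ 4 := by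
      have hd : (-(1800 / um ^ 4) * s ^ 8 + (400 / um ^ 3) * s ^ 7 + (3950 / um ^ 2) * s ^ 6
          - (3225 / um) * s ^ 5 + (775 / 2) * s ^ 4 + 325 * um * s ^ 3
          - (75 / 2) * um ^ 2 * s ^ 2 - (25 / 8) * um ^ 3 * s + (25 / 8) * um ^ 4 - 2 * um ^ 4) * um ^ 4
          = (9/8) * (um - 2*s) ^ 8 + (119/8) * s * (um - 2*s) ^ 7
            + (179/4) * s ^ 2 * (um - 2*s) ^ 6 + (233/2) * s ^ 3 * (um - 2*s) ^ 5
            + (3545/2) * s ^ 4 * (um - 2*s) ^ 4 + 7141 * s ^ 5 * (um - 2*s) ^ 3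
            + 10816 * s ^ 6 * (um - 2*s) ^ 2 + 8452 * s ^ 7 * (um - 2*s)
            + 3088 * s ^ 8 := by
        field_simp
        ring
      rw [hd]
      have h1 : (0:ℝ) < (9/8) * (um - 2*s) ^ 8 := by positivity
      have h2 : (0:ℝ) ≤ (119/8) * s * (um - 2*s) ^ 7 := by positivity
      have h3 : (0:ℝ) ≤ (179/4) * s ^ 2 * (um - 2*s) ^ 6 := by positivity
      have h4 : (0:ℝ) ≤ (233/2) * s ^ 3 * (um - 2*s) ^ 5 := by positivity
      have h5 : (0:ℝ) ≤ (3545/2) * s ^ 4 * (um - 2*s) ^ 4 := by positivity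
      have h6 : (0:ℝ) ≤ 7141 * s ^ 5 * (um - 2*s) ^ 3 := by positivity
      have h7 : (0:ℝ) ≤ 10816 * s ^ 6 * (um - 2*s) ^ 2 := by positivity
      have h8 : (0:ℝ) ≤ 8452 * s ^ 7 * (um - 2*s) := by positivity
      have h9 : (0:ℝ) ≤ 3088 * s ^ 8 := by positivity
      linarith
    nlinarith [key, hu4]
  · intro s hs0 hs1
    nlinarith [pow_pos hum 3, mul_pos (pow_pos hum 3) hum]
end

section
/- Estimate on the expansive part of the shock with the shift term (Lemma 4.4): Let φ : ℝ → ℝ be continuously differentiable with φ and φ′ square-integrable and φ⁴(u^S)′ integrable, and set Ẋ := (32/(25u_m²)) ∫_ℝ φ w(u^S) (u^S)′ dξ. Then ∫_{ξ_*}^{+∞} μ w(u^S) (φ′)² dξ + 3∫_{ξ_*}^{+∞} φ² u^S w(u^S) (u^S)′ dξ + Ẋ ∫_ℝ φ w(u^S) (u^S)′ dξ − (8/(25u_m²)) (∫_{−∞}^{ξ_*} φ w(u^S) (u^S)′ dξ)² − (3/4) ∫_ℝ φ⁴ w′(u^S) (u^S)′ dξ ≥ ∫_{ξ_*}^{+∞}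 μ w(u^S) (φ′)² dξ + (45/16 − (9/8)·ln 2) u_m³ ∫_{ξ_*}^{+∞} φ² (u^S)′ dξ + (25/64) u_m² Ẋ² + (3/4) ∫_ℝ φ⁴ |w′(u^S)| (u^S)′ dξ. -/
open MeasureTheory Filter

open Set Topology


noncomputable def wD (um s : ℝ) : ℝ :=
  if s < 0 then -(5/2*um)
  else if s < um/2 then (5/(2*um^2))*(12*um*s^2 - 16*s^3 - um^3)
  else 0

lemma wD_nonpos (um : ℝ) (hu : 0 < um) (s : ℝ) : wD um s ≤ 0 := by
  unfold wD
  split_ifs with h1 h2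
  · linarith
  · push_neg at h1
    have h5 : (0:ℝ) < 5/(2*um^2) := by positivity
    have key : 12*um*s^2 - 16*s^3 - um^3 ≤ 0 := by
      nlinarith [mul_nonneg (sq_nonneg (2*s - um)) (by linarith : (0:ℝ) ≤ 4*s + um)]
    nlinarith
  · exact le_refl _

lemma w_hasDerivAt (um : ℝ) (hu : 0 < um) (w : ℝ → ℝ)
    (hw : ∀ s, w s = if s < 0 then (5 / 2) * um * (um - s)
        else if s < um / 2 then (5 / (2 * um ^ 2)) * (um - s) * (4 * s ^ 3 + um ^ 3)
        else (15 / 8) * um ^ 2) (s : ℝ) :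
    HasDerivAt w (wD um s) s := by
  have hu2 : (0:ℝ) < um/2 := by linarith
  have hne : um ≠ 0 := ne_of_gt hu
  have h1 : ∀ x : ℝ, HasDerivAt (fun y => (5/2)*um*(um - y)) (-(5/2*um)) x := by
    intro x
    have : HasDerivAt (fun y => (5:ℝ)/2*um*(um - y)) ((5:ℝ)/2*um*(0-1)) x :=
      ((hasDerivAt_const x um).sub (hasDerivAt_id x)).const_mul ((5:ℝ)/2*um)
    convert this using 1; ring
  have h2 : ∀ x : ℝ, HasDerivAt (fun y => (5/(2*um^2))*(um - y)*(4*y^3 + um^3))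
      ((5/(2*um^2))*(12*um*x^2 - 16*x^3 - um^3)) x := by
    intro x
    have hA : HasDerivAt (fun y : ℝ => (5/(2*um^2))*(um - y)) ((5/(2*um^2))*(0-1)) x :=
      ((hasDerivAt_const x um).sub (hasDerivAt_id x)).const_mul _
    have hB : HasDerivAt (fun y : ℝ => 4*y^3 + um^3) (4*(3*x^2)) x := by
      simpa using ((hasDerivAt_pow 3 x).const_mul (4:ℝ)).add_const (um^3)
    have : HasDerivAt (fun y => (5/(2*um^2))*(um - y)*(4*y^3 + um^3))
        ((5/(2*um^2))*(0-1)*(4*x^3 + um^3) + (5/(2*um^2))*(um - x)*(4*(3*x^2))) x := hA.mul hB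
    convert this using 1; ring
  have w0 : w 0 = (5/2)*um*(um - 0) := by
    rw [hw 0, if_neg (lt_irrefl 0), if_pos hu2]; field_simp; ring
  have w02 : w 0 = (5/(2*um^2))*(um - 0)*(4*0^3 + um^3) := by
    rw [hw 0, if_neg (lt_irrefl 0), if_pos hu2]
  have wh : w (um/2) = (5/(2*um^2))*(um - um/2)*(4*(um/2)^3 + um^3) := by
    rw [hw (um/2), if_neg (not_lt.2 hu2.le), if_neg (lt_irrefl _)]; field_simp; ring
  have wh2 : w (um/2) = (15:ℝ)/8*um^2 := by
    rw [hw (um/2), if_neg (not_lt.2 hu2.le), if_neg (lt_irrefl _)]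
  rcases lt_trichotomy s 0 with hs | hs | hs
  · have hv : wD um s = -(5/2*um) := by unfold wD; rw [if_pos hs]
    rw [hv]
    refine (h1 s).congr_of_eventuallyEq ?_
    filter_upwards [Iio_mem_nhds hs] with x hx
    rw [hw x, if_pos (mem_Iio.mp hx)]
  · subst hs
    have hval : wD um 0 = -(5/2*um) := by
      unfold wD
      rw [if_neg (lt_irrefl (0:ℝ)), if_pos hu2]
      field_simp; ring
    rw [hval]
    have hleft : HasDerivWithinAt w (-(5/2*um)) (Iic 0) 0 := by
      refine ((h1 0).hasDerivWithinAt).congr (fun x hx => ?_) w0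
      rcases (mem_Iic.mp hx).lt_or_eq with h | h
      · rw [hw x, if_pos h]
      · subst h; exact w0
    have hright : HasDerivWithinAt w (-(5/2*um)) (Ici 0) 0 := by
      have h20 : HasDerivWithinAt (fun y => (5/(2*um^2))*(um - y)*(4*y^3 + um^3))
          (-(5/2*um)) (Ici 0) 0 := by
        have hval2 : (5/(2*um^2))*(12*um*(0:ℝ)^2 - 16*0^3 - um^3) = -(5/2*um) := by
          field_simp; ring
        exact hval2 ▸ (h2 0).hasDerivWithinAt
      refine h20.congr_of_eventuallyEq ?_ w02
      have hmem : Ico (0:ℝ) (um/2) ∈ 𝓝[Ici (0:ℝ)] 0 :=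
        Filter.inter_mem self_mem_nhdsWithin
          (mem_nhdsWithin_of_mem_nhds (Iio_mem_nhds hu2))
      filter_upwards [hmem] with x hx
      rw [hw x, if_neg (not_lt.2 hx.1), if_pos hx.2]
    have huniv := hleft.union hright
    rw [Iic_union_Ici] at huniv
    exact hasDerivWithinAt_univ.mp huniv
  · rcases lt_trichotomy s (um/2) with hs2 | hs2 | hs2
    · have hv : wD um s = (5/(2*um^2))*(12*um*s^2 - 16*s^3 - um^3) := by
        unfold wD; rw [if_neg (asymm hs), if_pos hs2]
      rw [hv]
      refine (h2 s).congr_of_eventuallyEq ?_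
      filter_upwards [Ioo_mem_nhds hs hs2] with x hx
      rw [hw x, if_neg (not_lt.2 hx.1.le), if_pos hx.2]
    · subst hs2
      have hval : wD um (um/2) = 0 := by
        unfold wD; rw [if_neg (not_lt.2 hu2.le), if_neg (lt_irrefl _)]
      rw [hval]
      have hleft : HasDerivWithinAt w 0 (Iic (um/2)) (um/2) := by
        have h2h : HasDerivWithinAt (fun y => (5/(2*um^2))*(um - y)*(4*y^3 + um^3))
            0 (Iic (um/2)) (um/2) := by
          have hval2 : (5/(2*um^2))*(12*um*(um/2)^2 - 16*(um/2)^3 - um^3) = 0 := by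
            field_simp; ring
          exact hval2 ▸ (h2 (um/2)).hasDerivWithinAt
        refine h2h.congr_of_eventuallyEq ?_ wh
        have hmem : Ioc (0:ℝ) (um/2) ∈ 𝓝[Iic (um/2)] (um/2) := by
          rw [show Ioc (0:ℝ) (um/2) = Iic (um/2) ∩ Ioi 0 from by ext x; simp [and_comm]]
          exact Filter.inter_mem self_mem_nhdsWithin
            (mem_nhdsWithin_of_mem_nhds (Ioi_mem_nhds hu2))
        filter_upwards [hmem] with x hx
        rcases hx.2.lt_or_eq with h | h
        · rw [hw x, if_neg (not_lt.2 hx.1.le), if_pos h]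
        · subst h; exact wh
      have hright : HasDerivWithinAt w 0 (Ici (um/2)) (um/2) := by
        refine ((hasDerivAt_const (um/2) ((15:ℝ)/8*um^2)).hasDerivWithinAt).congr
          (fun x hx => ?_) wh2
        rw [hw x, if_neg (not_lt.2 (le_trans hu2.le hx)), if_neg (not_lt.2 hx)]
      have huniv := hleft.union hright
      rw [Iic_union_Ici] at huniv
      exact hasDerivWithinAt_univ.mp huniv
    · have hv : wD um s = 0 := by
        unfold wD; rw [if_neg (not_lt.2 (le_trans hu2.le hs2.le)), if_neg (not_lt.2 hs2.le)]
      rw [hv]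
      refine ((hasDerivAt_const s ((15:ℝ)/8*um^2)).congr_of_eventuallyEq ?_)
      filter_upwards [Ioi_mem_nhds hs2] with x hx
      rw [hw x, if_neg (not_lt.2 (le_trans hu2.le (le_of_lt hx))), if_neg (not_lt.2 (le_of_lt hx))]

noncomputable def Hf (um s : ℝ) : ℝ := 45/8*um^2*(s - um/2) + 9/8*Real.log 2*um^3

set_option maxHeartbeats 1000000 in
/-- Estimate on the expansive part of the shock with the shift term (Lemma 4.4). -/
theorem expansive_part_estimate
    (μ uminus um σ : ℝ) (hμ : 0 < μ) (huminus : uminus < 0)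
    (hum : um = -uminus / 2) (hσ : σ = 3 * um ^ 2)
    (uS : ℝ → ℝ) (huS : ContDiff ℝ 1 uS)
    (hrange : ∀ ξ, uS ξ ∈ Set.Ioo uminus um)
    (hODE : ∀ ξ, μ * deriv uS ξ = (uS ξ - uminus) * (uS ξ - um) ^ 2)
    (hbot : Tendsto uS atBot (nhds uminus))
    (htop : Tendsto uS atTop (nhds um))
    (w : ℝ → ℝ)
    (hw : ∀ s, w s = if s < 0 then (5 / 2) * um * (um - s)
        else if s < um / 2 then (5 / (2 * um ^ 2)) * (um - s) * (4 * s ^ 3 + um ^ 3)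
        else (15 / 8) * um ^ 2)
    (ξs : ℝ) (hξs : uS ξs = um / 2)
    (φ : ℝ → ℝ) (hφ : ContDiff ℝ 1 φ)
    (hφ2 : Integrable (fun ξ => (φ ξ) ^ 2))
    (hφ'2 : Integrable (fun ξ => (deriv φ ξ) ^ 2))
    (hφ4 : Integrable (fun ξ => (φ ξ) ^ 4 * deriv uS ξ))
    (Xdot : ℝ)
    (hX : Xdot = (32 / (25 * um ^ 2)) * ∫ ξ, φ ξ * w (uS ξ) * deriv uS ξ) :
    (∫ ξ in Set.Ioi ξs, μ * w (uS ξ) * (deriv φ ξ) ^ 2)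
      + (45 / 16 - (9 / 8) * Real.log 2) * um ^ 3 * (∫ ξ in Set.Ioi ξs, (φ ξ) ^ 2 * deriv uS ξ)
      + (25 / 64) * um ^ 2 * Xdot ^ 2
      + (3 / 4) * (∫ ξ, (φ ξ) ^ 4 * |deriv w (uS ξ)| * deriv uS ξ)
    ≤ (∫ ξ in Set.Ioi ξs, μ * w (uS ξ) * (deriv φ ξ) ^ 2)
      + 3 * (∫ ξ in Set.Ioi ξs, (φ ξ) ^ 2 * uS ξ * w (uS ξ) * deriv uS ξ)
      + Xdot * (∫ ξ, φ ξ * w (uS ξ) * deriv uS ξ)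
      - (8 / (25 * um ^ 2)) * (∫ ξ in Set.Iio ξs, φ ξ * w (uS ξ) * deriv uS ξ) ^ 2
      - (3 / 4) * (∫ ξ, (φ ξ) ^ 4 * deriv w (uS ξ) * deriv uS ξ) := by
  have hu : 0 < um := by rw [hum]; linarith
  have hne : um ≠ 0 := ne_of_gt hu
  have hum2 : uminus = -2*um := by rw [hum]; ring
  have hL : (0.6931471803 : ℝ) < Real.log 2 := Real.log_two_gt_d9
  have hL0 : (0:ℝ) < Real.log 2 := by linarith
  set d : ℝ → ℝ := deriv uS with hd
  have hdS : ∀ ξ, HasDerivAt uS (d ξ) ξ := fun ξ => ((huS.differentiable one_ne_zero) ξ).hasDerivAt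
  have hd_pos : ∀ ξ, 0 < d ξ := by
    intro ξ
    have h1 := (hrange ξ).1
    have h2 := (hrange ξ).2
    have hsq : 0 < (uS ξ - um)^2 := by nlinarith
    have hP : 0 < (uS ξ - uminus) * (uS ξ - um)^2 := mul_pos (by linarith) hsq
    nlinarith [hODE ξ]
  have hd_cont : Continuous d := huS.continuous_deriv le_rfl
  have hd_bdd : ∀ ξ, d ξ ≤ 27*um^3/μ := by
    intro ξ
    have h1 := (hrange ξ).1
    have h2 := (hrange ξ).2
    rw [le_div_iff₀ hμ]
    have hODEξ := hODE ξ
    have e1 : (uS ξ - um)^2 ≤ 9*um^2 := by nlinarith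
    have e2 : uS ξ - uminus ≤ 3*um := by nlinarith
    calc d ξ * μ = (uS ξ - uminus) * (uS ξ - um)^2 := by linarith
    _ ≤ 3*um * (9*um^2) := mul_le_mul e2 e1 (sq_nonneg _) (by linarith)
    _ = 27*um^3 := by ring
  have hmono : StrictMono uS := strictMono_of_deriv_pos hd_pos
  have huSIci : ∀ ξ ∈ Ici ξs, um/2 ≤ uS ξ := by
    intro ξ hξ
    rw [← hξs]; exact hmono.le_iff_le.mpr hξ
  have hd_int_Ioi : IntegrableOn d (Ioi ξs) volume :=
    integrableOn_Ioi_deriv_of_nonneg (huS.continuous.continuousWithinAt)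
      (fun x _ => hdS x) (fun x _ => (hd_pos x).le) htop
  have hd_int_Iic : IntegrableOn d (Iic ξs) volume := by
    have hten : Tendsto (fun n : ℕ => ξs - (n:ℝ)) atTop atBot := by
      apply tendsto_atBot_add_const_left
      exact tendsto_neg_atBot_iff.mpr tendsto_natCast_atTop_atTop
    refine integrableOn_Iic_of_intervalIntegral_norm_bounded (3*um) ξs
      (fun n => hd_cont.integrableOn_Ioc) hten ?_
    filter_upwards with n
    have e0 : ∫ x in (ξs - (n:ℝ))..ξs, ‖d x‖ = ∫ x in (ξs - (n:ℝ))..ξs, d x := by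
      apply intervalIntegral.integral_congr
      intro x _
      simp only []; rw [Real.norm_eq_abs, abs_of_nonneg (hd_pos x).le]
    rw [e0, intervalIntegral.integral_eq_sub_of_hasDerivAt (fun x _ => hdS x)
      (hd_cont.intervalIntegrable _ _)]
    have := (hrange (ξs - (n:ℝ))).1
    rw [hξs]
    linarith
  have hd_int : Integrable d := by
    have h := hd_int_Iic.union hd_int_Ioi
    rwa [Iic_union_Ioi, integrableOn_univ] at h
  -- w facts
  have hwd : ∀ ξ, deriv w (uS ξ) = wD um (uS ξ) :=
    fun ξ => (w_hasDerivAt um hu w hw (uS ξ)).deriv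
  have hw_cont : Continuous w :=
    continuous_iff_continuousAt.mpr fun x => (w_hasDerivAt um hu w hw x).continuousAt
  have hw_nonneg : ∀ ξ, 0 ≤ w (uS ξ) := by
    intro ξ
    have h1 := (hrange ξ).1
    have h2 := (hrange ξ).2
    rw [hw (uS ξ)]
    split_ifs with b1 b2
    · nlinarith
    · push_neg at b1
      have h3 : (0:ℝ) ≤ 4*uS ξ^3 + um^3 := by nlinarith [pow_nonneg b1 3, pow_pos hu 3]
      have h4 : (0:ℝ) ≤ um - uS ξ := by linarith
      positivity
    · positivity
  have hw_bdd : ∀ ξ, w (uS ξ) ≤ 15/2*um^2 := by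
    intro ξ
    have h1 := (hrange ξ).1
    have h2 := (hrange ξ).2
    rw [hw (uS ξ)]
    split_ifs with b1 b2
    · nlinarith
    · push_neg at b1
      have h5 : (0:ℝ) < 5/(2*um^2) := by positivity
      have hs3 : uS ξ^3 ≤ (um/2)^3 := pow_le_pow_left₀ b1 b2.le 3
      have key : (um - uS ξ)*(4*uS ξ^3 + um^3) ≤ um * ((3/2)*um^3) :=
        mul_le_mul (by linarith) (by nlinarith) (by nlinarith [pow_nonneg b1 3, pow_pos hu 3]) hu.le
      calc (5/(2*um^2))*(um - uS ξ)*(4*uS ξ^3 + um^3)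
          = (5/(2*um^2))*((um - uS ξ)*(4*uS ξ^3 + um^3)) := by ring
        _ ≤ (5/(2*um^2))*(um*((3/2)*um^3)) := mul_le_mul_of_nonneg_left key h5.le
        _ = 15/4*um^2 := by field_simp; ring
        _ ≤ 15/2*um^2 := by nlinarith
    · nlinarith
  have hwIci : ∀ ξ, ξs ≤ ξ → w (uS ξ) = 15/8*um^2 := by
    intro ξ hξ
    have h1 := huSIci ξ hξ
    rw [hw (uS ξ), if_neg (not_lt.2 (by linarith)), if_neg (not_lt.2 h1)]
  -- integrability of products
  have hwuS_cont : Continuous fun ξ => w (uS ξ) := hw_cont.comp huS.continuous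
  have hg_int : Integrable (fun ξ => w (uS ξ) * d ξ) := by
    refine hd_int.bdd_mul hwuS_cont.aestronglyMeasurable (c := 15/2*um^2)
      (Filter.Eventually.of_forall fun ξ => ?_)
    rw [Real.norm_eq_abs, abs_of_nonneg (hw_nonneg ξ)]; exact hw_bdd ξ
  have hgd_bdd : ∀ ξ, ‖w (uS ξ) * d ξ‖ ≤ 15/2*um^2 * (27*um^3/μ) := by
    intro ξ
    rw [Real.norm_eq_abs, abs_of_nonneg (mul_nonneg (hw_nonneg ξ) (hd_pos ξ).le)]
    exact mul_le_mul (hw_bdd ξ) (hd_bdd ξ) (hd_pos ξ).le (by positivity)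
  have hgmeas : AEStronglyMeasurable (fun ξ => w (uS ξ) * d ξ) volume :=
    (hwuS_cont.mul hd_cont).aestronglyMeasurable
  have hφ2g_int : Integrable (fun ξ => (w (uS ξ) * d ξ) * φ ξ^2) :=
    hφ2.bdd_mul hgmeas (Filter.Eventually.of_forall hgd_bdd)
  have hφg_int : Integrable (fun ξ => φ ξ * w (uS ξ) * d ξ) := by
    have hbint : Integrable (fun ξ => (w (uS ξ)*d ξ)*φ ξ^2/2 + (w (uS ξ)*d ξ)/2) :=
      (hφ2g_int.div_const 2).add (hg_int.div_const 2)
    refine hbint.mono' (((hφ.continuous.mul hwuS_cont).mul hd_cont).aestronglyMeasurable) ?_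
    filter_upwards with ξ
    rw [Real.norm_eq_abs, abs_mul, abs_mul, abs_of_nonneg (hw_nonneg ξ),
      abs_of_nonneg (hd_pos ξ).le]
    nlinarith only [mul_nonneg (mul_nonneg (hw_nonneg ξ) (hd_pos ξ).le) (sq_nonneg (|φ ξ| - 1)),
      sq_abs (φ ξ), abs_nonneg (φ ξ), mul_nonneg (hw_nonneg ξ) (hd_pos ξ).le]
  have hIsplit : (∫ ξ in Iio ξs, φ ξ * w (uS ξ) * d ξ) + (∫ ξ in Ioi ξs, φ ξ * w (uS ξ) * d ξ)
      = ∫ ξ, φ ξ * w (uS ξ) * d ξ := by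
    rw [← integral_Iic_eq_integral_Iio]
    exact intervalIntegral.integral_Iic_add_Ioi hφg_int.integrableOn hφg_int.integrableOn
  -- bounded-multiplier integrability on Ioi
  have prodInt : ∀ m : ℝ → ℝ, Continuous m → (∃ C, ∀ ξ, ‖m ξ‖ ≤ C) →
      IntegrableOn (fun ξ => m ξ * φ ξ^2) (Ioi ξs) volume := by
    intro m hc hC
    obtain ⟨C, hC⟩ := hC
    exact hφ2.integrableOn.bdd_mul hc.aestronglyMeasurable (Filter.Eventually.of_forall hC)
  have hHcont : Continuous fun s => Hf um s := by
    unfold Hf; fun_prop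
  have hH_posIci : ∀ ξ, ξs ≤ ξ → 0 < Hf um (uS ξ) := by
    intro ξ hξ
    have := huSIci ξ hξ
    unfold Hf
    nlinarith [pow_pos hu 3]
  have hA_int : IntegrableOn (fun ξ => (Hf um (uS ξ) * d ξ) * φ ξ^2) (Ioi ξs) volume := by
    refine prodInt _ ((hHcont.comp huS.continuous).mul hd_cont)
      ⟨(45/8*um^2*(3*um) + 9/8*um^3) * (27*um^3/μ), fun ξ => ?_⟩
    have h1 := (hrange ξ).1
    have h2 := (hrange ξ).2
    have hLlt : Real.log 2 < 1 := by
      have := Real.log_two_lt_d9; linarith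
    have hHabs : |Hf um (uS ξ)| ≤ 45/8*um^2*(3*um) + 9/8*um^3 := by
      rw [abs_le]; unfold Hf
      constructor <;> nlinarith [pow_pos hu 3, mul_pos (mul_pos hu hu) hu]
    rw [Real.norm_eq_abs, abs_mul]
    refine mul_le_mul hHabs ?_ (abs_nonneg _) (by positivity)
    rw [abs_of_nonneg (hd_pos ξ).le]; exact hd_bdd ξ
  have hT_int : IntegrableOn (fun ξ => (uS ξ*(15/8*um^2)*d ξ)*φ ξ^2) (Ioi ξs) volume := by
    refine prodInt _ ((huS.continuous.mul continuous_const).mul hd_cont)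
      ⟨2*um*(15/8*um^2) * (27*um^3/μ), fun ξ => ?_⟩
    have h1 := (hrange ξ).1
    have h2 := (hrange ξ).2
    rw [Real.norm_eq_abs, abs_mul, abs_mul]
    have habs : |uS ξ| ≤ 2*um := by rw [abs_le]; constructor <;> nlinarith
    refine mul_le_mul (mul_le_mul habs (le_of_eq (abs_of_nonneg (by positivity))) (abs_nonneg _)
      (by positivity)) ?_ (abs_nonneg _) (by positivity)
    rw [abs_of_nonneg (hd_pos ξ).le]; exact hd_bdd ξ
  have hJ_int : IntegrableOn (fun ξ => d ξ*φ ξ^2) (Ioi ξs) volume := by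
    refine prodInt _ hd_cont ⟨27*um^3/μ, fun ξ => ?_⟩
    rw [Real.norm_eq_abs, abs_of_nonneg (hd_pos ξ).le]; exact hd_bdd ξ
  -- rewrite of the T and J integrals
  have hT_eq : ∫ ξ in Ioi ξs, φ ξ^2 * uS ξ * w (uS ξ) * d ξ
      = ∫ ξ in Ioi ξs, (uS ξ*(15/8*um^2)*d ξ)*φ ξ^2 := by
    refine setIntegral_congr_fun measurableSet_Ioi fun ξ hξ => ?_
    rw [hwIci ξ (le_of_lt hξ)]; ring
  have hJ_eq : ∫ ξ in Ioi ξs, φ ξ^2 * d ξ = ∫ ξ in Ioi ξs, d ξ*φ ξ^2 := by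
    refine setIntegral_congr_fun measurableSet_Ioi fun ξ hξ => ?_
    ring
  have hA_eq : 3 * (∫ ξ in Ioi ξs, φ ξ^2 * uS ξ * w (uS ξ) * d ξ)
      - (45 / 16 - (9 / 8) * Real.log 2) * um ^ 3 * (∫ ξ in Ioi ξs, φ ξ^2 * d ξ)
      = ∫ ξ in Ioi ξs, (Hf um (uS ξ) * d ξ) * φ ξ^2 := by
    rw [hT_eq, hJ_eq, ← integral_const_mul, ← integral_const_mul,
      ← integral_sub (hT_int.const_mul 3) (hJ_int.const_mul _)]
    refine setIntegral_congr_fun measurableSet_Ioi fun ξ hξ => ?_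
    unfold Hf; ring
  have hA_nonneg : 0 ≤ ∫ ξ in Ioi ξs, (Hf um (uS ξ) * d ξ) * φ ξ^2 :=
    setIntegral_nonneg measurableSet_Ioi fun ξ hξ =>
      mul_nonneg (mul_nonneg (hH_posIci ξ (le_of_lt hξ)).le (hd_pos ξ).le) (sq_nonneg _)
  -- B via FTC
  have hHum_pos : 0 < Hf um um := by unfold Hf; nlinarith [pow_pos hu 3]
  have hGd : ∀ x ∈ Ioi ξs, HasDerivAt (fun ξ => 5/8*um^2 * Real.log (Hf um (uS ξ)))
      (225/64*um^4 / Hf um (uS x) * d x) x := by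
    intro x hx
    have hHx : 0 < Hf um (uS x) := hH_posIci x (le_of_lt hx)
    have hH : HasDerivAt (fun ξ => Hf um (uS ξ)) (45/8*um^2 * d x) x := by
      have h0 := (((hdS x).sub_const (um/2)).const_mul ((45:ℝ)/8*um^2)).add_const
        (9/8*Real.log 2*um^3)
      exact h0
    have hlog := (hH.log (ne_of_gt hHx)).const_mul ((5:ℝ)/8*um^2)
    refine hlog.congr_deriv ?_
    rw [div_mul_eq_mul_div, mul_div_assoc']
    ring
  have hG_cont : ContinuousWithinAt (fun ξ => 5/8*um^2 * Real.log (Hf um (uS ξ))) (Ici ξs) ξs := by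
    apply ContinuousAt.continuousWithinAt
    have hc1 : Tendsto (fun ξ => Hf um (uS ξ)) (𝓝 ξs) (𝓝 (Hf um (uS ξs))) :=
      (hHcont.comp huS.continuous).continuousAt
    have hc2' := ((Real.continuousAt_log (ne_of_gt (hH_posIci ξs le_rfl))).tendsto).comp hc1
    have hc2 : ContinuousAt (fun ξ => Real.log (Hf um (uS ξ))) ξs := hc2'
    exact continuousAt_const.mul hc2
  have hG_top : Tendsto (fun ξ => 5/8*um^2 * Real.log (Hf um (uS ξ))) atTop
      (𝓝 (5/8*um^2 * Real.log (Hf um um))) := by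
    have h1 : Tendsto (fun ξ => Hf um (uS ξ)) atTop (𝓝 (Hf um um)) :=
      (hHcont.tendsto um).comp htop
    have h2 : Tendsto (fun ξ => Real.log (Hf um (uS ξ))) atTop (𝓝 (Real.log (Hf um um))) :=
      ((Real.continuousAt_log (ne_of_gt hHum_pos)).tendsto).comp h1
    exact h2.const_mul _
  have hB_nonneg_fn : ∀ x ∈ Ioi ξs, 0 ≤ 225/64*um^4 / Hf um (uS x) * d x := fun x hx =>
    mul_nonneg (div_nonneg (by positivity) (hH_posIci x (le_of_lt hx)).le) (hd_pos x).le
  have hB_int : IntegrableOn (fun x => 225/64*um^4 / Hf um (uS x) * d x) (Ioi ξs) volume :=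
    integrableOn_Ioi_deriv_of_nonneg hG_cont hGd hB_nonneg_fn hG_top
  have hB_val : ∫ x in Ioi ξs, 225/64*um^4 / Hf um (uS x) * d x
      = 5/8*um^2 * Real.log (Hf um um) - 5/8*um^2 * Real.log (Hf um (um/2)) := by
    rw [integral_Ioi_of_hasDerivAt_of_nonneg hG_cont hGd hB_nonneg_fn hG_top, hξs]
  have hHhalf : Hf um (um/2) = 9/8*Real.log 2*um^3 := by unfold Hf; ring
  have hHhalf_pos : 0 < Hf um (um/2) := by rw [hHhalf]; positivity
  have hB_le : (∫ x in Ioi ξs, 225/64*um^4 / Hf um (uS x) * d x) ≤ 25/16*um^2 := by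
    rw [hB_val]
    have hexp : (7:ℝ) ≤ Real.exp (5/2) := by
      have h1 : Real.exp 2 ≤ Real.exp (5/2) := Real.exp_le_exp.mpr (by norm_num)
      have h2 : Real.exp 2 = Real.exp 1 * Real.exp 1 := by
        rw [← Real.exp_add]; norm_num
      nlinarith only [Real.exp_one_gt_d9, h1, h2]
    have hXY : Hf um um ≤ Real.exp (5/2) * Hf um (um/2) := by
      rw [hHhalf]; unfold Hf
      nlinarith only [mul_le_mul_of_nonneg_right hexp
          (show (0:ℝ) ≤ 9/8*Real.log 2*um^3 by positivity),
        mul_lt_mul_of_pos_right hL (pow_pos hu 3), pow_pos hu 3, hu]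
    have hlog : Real.log (Hf um um) ≤ 5/2 + Real.log (Hf um (um/2)) := by
      calc Real.log (Hf um um) ≤ Real.log (Real.exp (5/2) * Hf um (um/2)) :=
            Real.log_le_log hHum_pos hXY
        _ = 5/2 + Real.log (Hf um (um/2)) := by
            rw [Real.log_mul (Real.exp_ne_zero _) (ne_of_gt hHhalf_pos), Real.log_exp]
    nlinarith only [hlog, sq_nonneg um, mul_le_mul_of_nonneg_left
      (show Real.log (Hf um um) - Real.log (Hf um (um/2)) ≤ 5/2 by linarith)
      (show (0:ℝ) ≤ 5/8*um^2 by positivity)]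
  -- Cauchy-Schwarz with shifted weight
  have hstep : ∀ t : ℝ, 0 < t →
      |∫ ξ in Ioi ξs, φ ξ * w (uS ξ) * d ξ|
        ≤ t/2 * (∫ ξ in Ioi ξs, (Hf um (uS ξ) * d ξ) * φ ξ^2)
          + 1/(2*t) * (∫ x in Ioi ξs, 225/64*um^4 / Hf um (uS x) * d x) := by
    intro t ht
    have habs : |∫ ξ in Ioi ξs, φ ξ * w (uS ξ) * d ξ|
        ≤ ∫ ξ in Ioi ξs, |φ ξ * w (uS ξ) * d ξ| := by
      simpa only [Real.norm_eq_abs] using norm_integral_le_integral_norm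
        (μ := volume.restrict (Ioi ξs)) (fun ξ => φ ξ * w (uS ξ) * d ξ)
    refine habs.trans ?_
    have hmono2 : ∫ ξ in Ioi ξs, |φ ξ * w (uS ξ) * d ξ|
        ≤ ∫ ξ in Ioi ξs, (t/2 * ((Hf um (uS ξ) * d ξ) * φ ξ^2)
            + 1/(2*t) * (225/64*um^4 / Hf um (uS ξ) * d ξ)) := by
      refine setIntegral_mono_on hφg_int.integrableOn.abs
        ((hA_int.const_mul _).add (hB_int.const_mul _)) measurableSet_Ioi ?_
      intro ξ hξ
      have hH : 0 < Hf um (uS ξ) := hH_posIci ξ (le_of_lt hξ)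
      rw [hwIci ξ (le_of_lt hξ), abs_mul, abs_mul, abs_of_nonneg (hd_pos ξ).le,
        abs_of_nonneg (show (0:ℝ) ≤ 15/8*um^2 by positivity)]
      have hq : 225/64*um^4 / Hf um (uS ξ) * Hf um (uS ξ) = 225/64*um^4 :=
        div_mul_cancel₀ _ (ne_of_gt hH)
      have key : |φ ξ| * (15/8*um^2)
          ≤ t/2 * (Hf um (uS ξ) * φ ξ^2) + 1/(2*t) * (225/64*um^4 / Hf um (uS ξ)) := by
        have expand : 2*t*Hf um (uS ξ) * (t/2 * (Hf um (uS ξ) * φ ξ^2)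
            + 1/(2*t) * (225/64*um^4 / Hf um (uS ξ)))
            = t^2*(Hf um (uS ξ))^2*φ ξ^2 + 225/64*um^4 / Hf um (uS ξ) * Hf um (uS ξ) := by
          field_simp
        have h1 : 2*t*Hf um (uS ξ) * (|φ ξ| * (15/8*um^2))
            ≤ 2*t*Hf um (uS ξ) * (t/2 * (Hf um (uS ξ) * φ ξ^2)
              + 1/(2*t) * (225/64*um^4 / Hf um (uS ξ))) := by
          rw [expand, hq, ← sq_abs (φ ξ)]
          nlinarith only [sq_nonneg (t*Hf um (uS ξ)*|φ ξ| - 15/8*um^2)]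
        exact le_of_mul_le_mul_left h1 (by positivity)
      nlinarith only [mul_le_mul_of_nonneg_right key (hd_pos ξ).le]
    refine hmono2.trans (le_of_eq ?_)
    rw [integral_add (hA_int.const_mul _) (hB_int.const_mul _), integral_const_mul,
      integral_const_mul]
  have hCS : (∫ ξ in Ioi ξs, φ ξ * w (uS ξ) * d ξ)^2
      ≤ 25/16*um^2 * (∫ ξ in Ioi ξs, (Hf um (uS ξ) * d ξ) * φ ξ^2) := by
    rcases hA_nonneg.lt_or_eq with hA | hA
    · set A := ∫ ξ in Ioi ξs, (Hf um (uS ξ) * d ξ) * φ ξ^2 with hAdef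
      set t := Real.sqrt (25/16*um^2/A) with htdef
      have ht : 0 < t := Real.sqrt_pos.mpr (by positivity)
      have ht2 : t^2 = 25/16*um^2/A := Real.sq_sqrt (by positivity)
      have h1 := hstep t ht
      have h2 : 1/(2*t) * (∫ x in Ioi ξs, 225/64*um^4 / Hf um (uS x) * d x)
          ≤ 1/(2*t) * (25/16*um^2) := mul_le_mul_of_nonneg_left hB_le (by positivity)
      have h3 : 1/(2*t) * (25/16*um^2) = t/2*A := by
        rw [show 25/16*um^2 = t^2*A from by rw [ht2]; field_simp]
        field_simp
      have h4 : |∫ ξ in Ioi ξs, φ ξ * w (uS ξ) * d ξ| ≤ t*A := by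
        rw [h3] at h2; linarith
      have h5 := abs_le.mp h4
      calc (∫ ξ in Ioi ξs, φ ξ * w (uS ξ) * d ξ)^2 ≤ (t*A)^2 :=
            sq_le_sq' (by linarith [h5.1]) h5.2
        _ = t^2*A^2 := by ring
        _ = 25/16*um^2*A := by rw [ht2]; field_simp
    · have hB0 : 0 ≤ ∫ x in Ioi ξs, 225/64*um^4 / Hf um (uS x) * d x :=
        setIntegral_nonneg measurableSet_Ioi hB_nonneg_fn
      have hIp0 : |∫ ξ in Ioi ξs, φ ξ * w (uS ξ) * d ξ| ≤ 0 := by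
        by_contra hc
        push_neg at hc
        have ht : 0 < ((∫ x in Ioi ξs, 225/64*um^4 / Hf um (uS x) * d x)+1)
            / |∫ ξ in Ioi ξs, φ ξ * w (uS ξ) * d ξ| := by positivity
        have h1 := hstep _ ht
        rw [← hA, mul_zero, zero_add] at h1
        generalize hYe : |∫ ξ in Ioi ξs, φ ξ * w (uS ξ) * d ξ| = Y at h1 hc
        generalize hBe : (∫ x in Ioi ξs, 225/64*um^4 / Hf um (uS x) * d x) = B at h1 hB0
        have e : 1/(2*((B+1)/Y))*B = Y*B/(2*(B+1)) := by field_simp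
        rw [e] at h1
        have h1' := mul_le_mul_of_nonneg_right h1 (show (0:ℝ) ≤ 2*(B+1) by linarith)
        rw [div_mul_cancel₀ _ (show (2*(B+1):ℝ) ≠ 0 by positivity)] at h1'
        nlinarith only [h1', hc, hB0]
      have hz : (∫ ξ in Ioi ξs, φ ξ * w (uS ξ) * d ξ) = 0 := by
        have := abs_nonneg (∫ ξ in Ioi ξs, φ ξ * w (uS ξ) * d ξ)
        have := abs_eq_zero.mp (le_antisymm hIp0 this)
        exact this
      rw [hz, ← hA]
      norm_num
  -- the |w'| term
  have hKabs : (∫ ξ, φ ξ^4 * |deriv w (uS ξ)| * d ξ) = -∫ ξ, φ ξ^4 * deriv w (uS ξ) * d ξ := by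
    rw [← integral_neg]
    congr 1
    funext ξ
    rw [hwd ξ, abs_of_nonpos (wD_nonpos um hu (uS ξ))]
    ring
  have key1 : 16/(25*um^2)*(∫ ξ in Ioi ξs, φ ξ * w (uS ξ) * d ξ)^2
      ≤ 3 * (∫ ξ in Ioi ξs, φ ξ^2 * uS ξ * w (uS ξ) * d ξ)
        - (45 / 16 - (9 / 8) * Real.log 2) * um ^ 3 * (∫ ξ in Ioi ξs, φ ξ^2 * d ξ) := by
    rw [hA_eq]
    have h6 := mul_le_mul_of_nonneg_left hCS (show (0:ℝ) ≤ 16/(25*um^2) by positivity)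
    calc 16/(25*um^2)*(∫ ξ in Ioi ξs, φ ξ * w (uS ξ) * d ξ)^2
        ≤ 16/(25*um^2)*(25/16*um^2 * (∫ ξ in Ioi ξs, (Hf um (uS ξ) * d ξ) * φ ξ^2)) := h6
      _ = ∫ ξ in Ioi ξs, (Hf um (uS ξ) * d ξ) * φ ξ^2 := by
          field_simp
  set T := ∫ ξ in Ioi ξs, φ ξ^2 * uS ξ * w (uS ξ) * d ξ with hT
  set J := ∫ ξ in Ioi ξs, φ ξ^2 * d ξ with hJ
  set Im := ∫ ξ in Iio ξs, φ ξ * w (uS ξ) * d ξ with hIm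
  set Ip := ∫ ξ in Ioi ξs, φ ξ * w (uS ξ) * d ξ with hIp
  rw [← hIsplit] at hX
  rw [hKabs, ← hIsplit, hX, show (32:ℝ)/(25*um^2) = 32*(1/(25*um^2)) from by ring,
    show (8:ℝ)/(25*um^2) = 8*(1/(25*um^2)) from by ring]
  have key1' : 16*(1/(25*um^2))*Ip^2
      ≤ 3*T - (45 / 16 - (9 / 8) * Real.log 2) * um ^ 3 * J := by
    calc 16*(1/(25*um^2))*Ip^2 = 16/(25*um^2)*Ip^2 := by ring
      _ ≤ _ := key1
  have e8' : 8*(1/(25*um^2))*Im^2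
      ≤ 16*(1/(25*um^2))*(Im+Ip)^2 + 16*(1/(25*um^2))*Ip^2 := by
    have h0 : 8*Im^2 ≤ 16*(Im+Ip)^2 + 16*Ip^2 := by nlinarith only [sq_nonneg (Im+2*Ip)]
    have h7 := mul_le_mul_of_nonneg_left h0 (show (0:ℝ) ≤ 1/(25*um^2) by positivity)
    calc 8*(1/(25*um^2))*Im^2 = 1/(25*um^2)*(8*Im^2) := by ring
      _ ≤ 1/(25*um^2)*(16*(Im+Ip)^2 + 16*Ip^2) := h7
      _ = 16*(1/(25*um^2))*(Im+Ip)^2 + 16*(1/(25*um^2))*Ip^2 := by ring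
  have eX2' : 25/64*um^2*(32*(1/(25*um^2))*(Im+Ip))^2 = 16*(1/(25*um^2))*(Im+Ip)^2 := by
    field_simp
    ring
  linarith [key1', e8', eX2']
end

section
/- Estimate of the cubic and cross terms N(t) (Lemma 4.6): Fix t ≥ 0 and set v(ξ) := u^R(1+t, ξ + σt). Let ε > 0 and let φ : ℝ → ℝ be continuously differentiable with ‖φ‖_{H¹(ℝ)} ≤ ε, and set Ẋ := (32/(25u_m²)) ∫_ℝ φ w(u^S) (u^S)′ dξ. Define N := Ẋ ∫_ℝ φ w(u^S) v′ dξ − (Ẋ/2) ∫_ℝ φ² w′(u^S) (u^S)′ dξ + ∫_ℝ φ³ w(u^S) ((u^S)′ + v′) dξ − 2 ∫_ℝ φ³ (u^S + v − u_m) w′(u^S) (u^S)′ dξ − 3 ∫_ℝ φ² (v − u_m) u^S w′(u^S) (u^S)′ dξ. Then |N| ≤ (36√2 + (35√2)/2) u_m² ε ∫_ℝ φ² (u^S)′ dξ + (5√2 u_m δ_R ε + 15 u_m² δ_R) ∫_ℝ φ² (u^S)′ dξ + (√2 ε + (48/5) δ_R) ∫_ℝ φ² w(u^S) v′ dξ +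 (25/128) u_m² Ẋ². -/
open MeasureTheory Filter Set

lemma NE_tanh_deriv (x : ℝ) : HasDerivAt Real.tanh (1 / Real.cosh x ^ 2) x := by
  have h := (Real.hasDerivAt_sinh x).div (Real.hasDerivAt_cosh x) (Real.cosh_pos x).ne'
  have e : Real.tanh = fun y => Real.sinh y / Real.cosh y := funext Real.tanh_eq_sinh_div_cosh
  rw [e]
  refine h.congr_deriv ?_
  have h2 := Real.cosh_sq_sub_sinh_sq x
  have h3 := (Real.cosh_pos x).ne'
  rw [show Real.cosh x * Real.cosh x - Real.sinh x * Real.sinh x = 1 by nlinarith [h2]]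

lemma NE_tanh_mem (x : ℝ) : Real.tanh x ∈ Set.Ioo (-1 : ℝ) 1 := by
  have h1 := Real.cosh_pos x
  have h2 := Real.cosh_sub_sinh x
  have h3 := Real.cosh_add_sinh x
  have h4 := Real.exp_pos (-x)
  have h5 := Real.exp_pos x
  rw [Real.tanh_eq_sinh_div_cosh]
  constructor
  · rw [lt_div_iff₀ h1]; nlinarith
  · rw [div_lt_one h1]; nlinarith

lemma NE_key_mono (f f' : ℝ → ℝ) (hd : ∀ x, HasDerivAt f (f' x) x) (hc : Continuous f')
    (h0 : ∀ x, 0 ≤ f' x) (m M : ℝ) (hb : ∀ x, f x ∈ Set.Icc m M) :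
    Integrable f' ∧ (∫ x, f' x) ≤ M - m := by
  have hsub : ∀ R : ℝ, (∫ x in (-R)..R, f' x) = f R - f (-R) :=
    fun R => intervalIntegral.integral_eq_sub_of_hasDerivAt (fun x _ => hd x)
      (hc.intervalIntegrable _ _)
  have hbnd : ∀ R : ℝ, (∫ x in (-R)..R, f' x) ≤ M - m := by
    intro R
    rw [hsub R]
    have h1 := hb R; have h2 := hb (-R)
    simp only [Set.mem_Icc] at h1 h2
    linarith [h1.2, h2.1]
  have ha : Tendsto (fun R : ℝ => -R) atTop atBot := tendsto_neg_atBot_iff.mpr tendsto_id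
  have hbT : Tendsto (fun R : ℝ => R) atTop atTop := tendsto_id
  have hI : Integrable f' := by
    refine integrable_of_intervalIntegral_norm_bounded (M - m)
      (fun R => (hc.integrableOn_Icc).mono_set Set.Ioc_subset_Icc_self) ha hbT ?_
    filter_upwards with R
    have : (∫ x in (-R)..R, ‖f' x‖) = ∫ x in (-R)..R, f' x :=
      intervalIntegral.integral_congr fun x _ => Real.norm_of_nonneg (h0 x)
    rw [this]; exact hbnd R
  refine ⟨hI, ?_⟩
  exact le_of_tendsto (intervalIntegral_tendsto_integral hI ha hbT)
    (Eventually.of_forall hbnd)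

lemma NE_sup_sq (φ : ℝ → ℝ) (hφ : ContDiff ℝ 1 φ)
    (h2 : Integrable (fun x => φ x ^ 2)) (h'2 : Integrable (fun x => deriv φ x ^ 2)) :
    ∀ x, φ x ^ 2 ≤ (∫ x, φ x ^ 2) + ∫ x, deriv φ x ^ 2 := by
  intro x
  set h' : ℝ → ℝ := fun y => 2 * φ y * deriv φ y with hh'
  have hdφ : ∀ y, HasDerivAt φ (deriv φ y) y :=
    fun y => (hφ.differentiable one_ne_zero y).hasDerivAt
  have hdsq : ∀ y, HasDerivAt (fun z => φ z ^ 2) (h' y) y := by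
    intro y
    have := (hdφ y).pow 2
    exact this.congr_deriv (by simp [hh', mul_comm, mul_assoc, mul_left_comm])
  have hcφ : Continuous φ := hφ.continuous
  have hcφ' : Continuous (deriv φ) := hφ.continuous_deriv le_rfl
  have hch' : Continuous h' := by continuity
  have hintsum : Integrable (fun y => φ y ^ 2 + deriv φ y ^ 2) := h2.add h'2
  have hb : ∀ y, |h' y| ≤ φ y ^ 2 + deriv φ y ^ 2 := by
    intro y
    have : h' y = 2 * φ y * deriv φ y := rfl
    rw [this]
    exact abs_le.mpr ⟨by nlinarith [sq_nonneg (φ y + deriv φ y)],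
      by nlinarith [sq_nonneg (φ y - deriv φ y)]⟩
  have hint' : Integrable h' := by
    refine hintsum.mono' hch'.aestronglyMeasurable ?_
    filter_upwards with y
    simpa [Real.norm_eq_abs] using hb y
  -- limit of φ R ^ 2 as R → ∞
  have htt : Tendsto (fun R : ℝ => ∫ y in x..R, h' y) atTop
      (nhds (∫ y in Set.Ioi x, h' y)) :=
    intervalIntegral_tendsto_integral_Ioi x hint'.integrableOn tendsto_id
  have hsub : ∀ R : ℝ, (∫ y in x..R, h' y) = φ R ^ 2 - φ x ^ 2 :=
    fun R => intervalIntegral.integral_eq_sub_of_hasDerivAt (fun y _ => hdsq y)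
      (hch'.intervalIntegrable _ _)
  have htt2 : Tendsto (fun R : ℝ => φ R ^ 2) atTop
      (nhds (φ x ^ 2 + ∫ y in Set.Ioi x, h' y)) := by
    have := htt.const_add (φ x ^ 2)
    refine this.congr fun R => ?_
    rw [hsub R]; ring
  set L := φ x ^ 2 + ∫ y in Set.Ioi x, h' y with hL
  have hL0 : L ≤ 0 := by
    by_contra hpos
    push_neg at hpos
    have hev : ∀ᶠ R in atTop, L / 2 ≤ φ R ^ 2 := by
      filter_upwards [htt2.eventually (eventually_gt_nhds (by linarith : L / 2 < L))] with R hR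
      exact le_of_lt hR
    obtain ⟨M, hM⟩ := hev.exists_forall_of_atTop
    have hIOn : IntegrableOn (fun y => φ y ^ 2) (Set.Ioi M) := h2.integrableOn
    have hconst : IntegrableOn (fun _ : ℝ => L / 2) (Set.Ioi M) := by
      refine Integrable.mono' hIOn (aestronglyMeasurable_const) ?_
      rw [ae_restrict_iff' measurableSet_Ioi]
      filter_upwards with y hy
      have := hM y (le_of_lt hy)
      rw [Real.norm_eq_abs, abs_of_nonneg (by linarith)]
      exact this
    rw [integrableOn_const_iff] at hconst
    rcases hconst with h | h
    · simp at h; linarith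
    · simp [Real.volume_Ioi] at h
  have hstep : φ x ^ 2 ≤ ∫ y, |h' y| := by
    have h1 : φ x ^ 2 = L - ∫ y in Set.Ioi x, h' y := by rw [hL]; ring
    have h2' : -(∫ y in Set.Ioi x, h' y) ≤ ∫ y in Set.Ioi x, |h' y| := by
      have habs : |∫ y in Set.Ioi x, h' y| ≤ ∫ y in Set.Ioi x, |h' y| := by
        simpa [Real.norm_eq_abs] using
          norm_integral_le_integral_norm (f := h') (μ := volume.restrict (Set.Ioi x))
      calc -(∫ y in Set.Ioi x, h' y) ≤ |∫ y in Set.Ioi x, h' y| := neg_le_abs _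
        _ ≤ ∫ y in Set.Ioi x, |h' y| := habs
    have h3 : (∫ y in Set.Ioi x, |h' y|) ≤ ∫ y, |h' y| := by
      refine setIntegral_le_integral hint'.abs ?_
      filter_upwards with y using abs_nonneg _
    linarith
  have hfinal : (∫ y, |h' y|) ≤ (∫ y, φ y ^ 2) + ∫ y, deriv φ y ^ 2 := by
    rw [← integral_add h2 h'2]
    exact integral_mono hint'.abs hintsum fun y => hb y
  linarith

noncomputable def NEwdf (um s : ℝ) : ℝ :=
  if s < 0 then -(5 / 2 * um)
  else if s < um / 2 then 5 / (2 * um ^ 2) * (-16 * s ^ 3 + 12 * um * s ^ 2 - um ^ 3)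
  else 0

lemma NE_wdf_meas (um : ℝ) : Measurable (NEwdf um) := by
  unfold NEwdf
  refine Measurable.ite (measurableSet_lt measurable_id measurable_const) measurable_const
    (Measurable.ite (measurableSet_lt measurable_id measurable_const) (by fun_prop) measurable_const)

lemma NE_wdf_bound (um : ℝ) (hum : 0 < um) (s : ℝ) : |NEwdf um s| ≤ 5 / 2 * um := by
  unfold NEwdf
  split_ifs with h1 h2
  · rw [abs_neg, abs_of_nonneg (by positivity)]
  · push_neg at h1
    have hg : |(-16 * s ^ 3 + 12 * um * s ^ 2 - um ^ 3)| ≤ um ^ 3 := by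
      rw [abs_le]
      constructor
      · nlinarith [sq_nonneg s, mul_nonneg (mul_nonneg h1 h1) h1]
      · nlinarith [mul_nonneg (mul_nonneg h1 h1) h1, sq_nonneg (um - 2*s),
          mul_nonneg (sq_nonneg (um - 2*s)) h1]
    rw [abs_mul, abs_of_nonneg (by positivity : (0:ℝ) ≤ 5 / (2 * um ^ 2))]
    calc 5 / (2 * um ^ 2) * |(-16 * s ^ 3 + 12 * um * s ^ 2 - um ^ 3)|
        ≤ 5 / (2 * um ^ 2) * um ^ 3 := by
          exact mul_le_mul_of_nonneg_left hg (by positivity)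
      _ = 5 / 2 * um := by field_simp
  · rw [abs_zero]; positivity

lemma NE_w_deriv (um : ℝ) (hum : 0 < um) (w : ℝ → ℝ)
    (hw : ∀ s, w s = if s < 0 then (5 / 2) * um * (um - s)
        else if s < um / 2 then (5 / (2 * um ^ 2)) * (um - s) * (4 * s ^ 3 + um ^ 3)
        else (15 / 8) * um ^ 2) :
    ∀ s, HasDerivAt w (NEwdf um s) s := by
  have hL : ∀ y : ℝ, HasDerivAt (fun z => (5 / 2) * um * (um - z)) (-(5 / 2 * um)) y := by
    intro y
    have h := ((hasDerivAt_id y).const_sub um).const_mul ((5 : ℝ) / 2 * um)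
    simp only [id_eq, mul_neg_one] at h
    exact h
  have hM : ∀ y : ℝ, HasDerivAt (fun z => (5 / (2 * um ^ 2)) * (um - z) * (4 * z ^ 3 + um ^ 3))
      (5 / (2 * um ^ 2) * (-16 * y ^ 3 + 12 * um * y ^ 2 - um ^ 3)) y := by
    intro y
    have h1 : HasDerivAt (fun z : ℝ => um - z) (-1) y := (hasDerivAt_id y).const_sub um
    have h2 : HasDerivAt (fun z : ℝ => 4 * z ^ 3 + um ^ 3) (4 * (3 * y ^ 2)) y := by
      simpa using ((hasDerivAt_pow 3 y).const_mul (4 : ℝ)).add_const (um ^ 3)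
    have h := (h1.mul h2).const_mul ((5 : ℝ) / (2 * um ^ 2))
    refine (h.congr_deriv (by ring)).congr_of_eventuallyEq (Eventually.of_forall fun z => ?_)
    simp only [Pi.mul_apply]; ring
  have hC : ∀ y : ℝ, HasDerivAt (fun _ : ℝ => (15 / 8) * um ^ 2) 0 y := fun y =>
    hasDerivAt_const y _
  have hum2 : (0:ℝ) < um / 2 := by linarith
  intro s
  rcases lt_trichotomy s 0 with hs | hs | hs
  · have hev : w =ᶠ[nhds s] fun z => (5 / 2) * um * (um - z) := by
      filter_upwards [eventually_lt_nhds hs] with z hz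
      rw [hw z, if_pos hz]
    have := (hL s).congr_of_eventuallyEq hev
    simpa [NEwdf, if_pos hs] using this
  · subst hs
    have e1 : ∀ y ∈ Set.Iic (0:ℝ), w y = (5 / 2) * um * (um - y) := by
      intro y hy
      rcases lt_or_eq_of_le (Set.mem_Iic.mp hy) with h | h
      · rw [hw y, if_pos h]
      · subst h
        rw [hw 0, if_neg (lt_irrefl 0), if_pos hum2]
        field_simp; ring
    have e2 : ∀ y ∈ Set.Ici (0:ℝ), y < um / 2 →
        w y = (5 / (2 * um ^ 2)) * (um - y) * (4 * y ^ 3 + um ^ 3) := by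
      intro y hy hlt
      rw [hw y, if_neg (not_lt.mpr (Set.mem_Ici.mp hy)), if_pos hlt]
    have hd1 : HasDerivWithinAt w (-(5 / 2 * um)) (Set.Iic 0) 0 :=
      (hL 0).hasDerivWithinAt.congr e1 (e1 0 Set.self_mem_Iic)
    have hd2 : HasDerivWithinAt w (-(5 / 2 * um)) (Set.Ici 0) 0 := by
      have h := (hM 0).hasDerivWithinAt.congr_of_mem
        (fun y (hy : y ∈ Set.Ici (0:ℝ) ∩ Set.Iio (um/2)) => e2 y hy.1 hy.2)
        ⟨Set.mem_Ici.mpr le_rfl, Set.mem_Iio.mpr hum2⟩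
      have h' : HasDerivWithinAt w (5 / (2 * um ^ 2) * (-16 * 0 ^ 3 + 12 * um * 0 ^ 2 - um ^ 3))
          (Set.Ici 0) 0 := by
        refine h.mono_of_mem_nhdsWithin ?_
        have : Set.Iio (um / 2) ∈ nhdsWithin (0:ℝ) (Set.Ici 0) :=
          nhdsWithin_le_nhds (Iio_mem_nhds hum2)
        exact Filter.inter_mem self_mem_nhdsWithin this
      convert h' using 1
      field_simp; ring
    have := hd1.union hd2
    rw [Set.Iic_union_Ici, hasDerivWithinAt_univ] at this
    have hval : NEwdf um 0 = -(5 / 2 * um) := by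
      simp only [NEwdf, lt_irrefl, if_false, if_pos hum2]
      field_simp; ring
    rw [hval]
    exact this
  · rcases lt_trichotomy s (um / 2) with hs2 | hs2 | hs2
    · have hev : w =ᶠ[nhds s] fun z => (5 / (2 * um ^ 2)) * (um - z) * (4 * z ^ 3 + um ^ 3) := by
        filter_upwards [eventually_gt_nhds hs, eventually_lt_nhds hs2] with z hz1 hz2
        rw [hw z, if_neg (not_lt.mpr (le_of_lt hz1)), if_pos hz2]
      have := (hM s).congr_of_eventuallyEq hev
      simpa [NEwdf, not_lt.mpr (le_of_lt hs), if_pos hs2] using this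
    · subst hs2
      have e2 : ∀ y ∈ Set.Iic (um / 2), 0 < y →
          w y = (5 / (2 * um ^ 2)) * (um - y) * (4 * y ^ 3 + um ^ 3) := by
        intro y hy hpos
        rcases lt_or_eq_of_le (Set.mem_Iic.mp hy) with h | h
        · rw [hw y, if_neg (not_lt.mpr (le_of_lt hpos)), if_pos h]
        · subst h
          rw [hw _, if_neg (not_lt.mpr (le_of_lt hpos)), if_neg (lt_irrefl _)]
          field_simp; ring
      have e3 : ∀ y ∈ Set.Ici (um / 2), w y = (15 / 8) * um ^ 2 := by
        intro y hy
        have hy' := Set.mem_Ici.mp hy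
        rw [hw y, if_neg (not_lt.mpr (by linarith : (0:ℝ) ≤ y)), if_neg (not_lt.mpr hy')]
      have hd2 : HasDerivWithinAt w 0 (Set.Ici (um / 2)) (um / 2) :=
        (hC (um / 2)).hasDerivWithinAt.congr e3 (e3 _ Set.self_mem_Ici)
      have hd1 : HasDerivWithinAt w 0 (Set.Iic (um / 2)) (um / 2) := by
        have h := (hM (um / 2)).hasDerivWithinAt.congr_of_mem
          (fun y (hy : y ∈ Set.Iic (um/2) ∩ Set.Ioi (0:ℝ)) => e2 y hy.1 hy.2)
          ⟨Set.self_mem_Iic, Set.mem_Ioi.mpr hum2⟩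
        have h' : HasDerivWithinAt w
            (5 / (2 * um ^ 2) * (-16 * (um / 2) ^ 3 + 12 * um * (um / 2) ^ 2 - um ^ 3))
            (Set.Iic (um / 2)) (um / 2) := by
          refine h.mono_of_mem_nhdsWithin ?_
          have : Set.Ioi (0:ℝ) ∈ nhdsWithin (um / 2) (Set.Iic (um / 2)) :=
            nhdsWithin_le_nhds (Ioi_mem_nhds hum2)
          exact Filter.inter_mem self_mem_nhdsWithin this
        convert h' using 1
        field_simp; ring
      have := hd1.union hd2
      rw [Set.Iic_union_Ici, hasDerivWithinAt_univ] at this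
      have hval : NEwdf um (um / 2) = 0 := by
        simp only [NEwdf, not_lt.mpr (le_of_lt hum2), if_false, lt_irrefl]
      rw [hval]
      exact this
    · have hev : w =ᶠ[nhds s] fun _ => (15 / 8) * um ^ 2 := by
        filter_upwards [eventually_gt_nhds hs2] with z hz
        rw [hw z, if_neg (not_lt.mpr (by linarith : (0:ℝ) ≤ z)), if_neg (not_lt.mpr (le_of_lt hz))]
      have := (hC s).congr_of_eventuallyEq hev
      simpa [NEwdf, not_lt.mpr (le_of_lt (lt_trans hum2 hs2)), not_lt.mpr (le_of_lt hs2)] using this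

lemma NE_w_bound (um : ℝ) (hum : 0 < um) (w : ℝ → ℝ)
    (hw : ∀ s, w s = if s < 0 then (5 / 2) * um * (um - s)
        else if s < um / 2 then (5 / (2 * um ^ 2)) * (um - s) * (4 * s ^ 3 + um ^ 3)
        else (15 / 8) * um ^ 2)
    (s : ℝ) (h1 : -(2 * um) < s) (h2 : s < um) :
    0 ≤ w s ∧ w s ≤ 15 / 2 * um ^ 2 := by
  rw [hw s]
  split_ifs with hs1 hs2
  · constructor <;> nlinarith
  · push_neg at hs1
    have hA : um / 2 < um - s ∧ um - s ≤ um := ⟨by linarith, by linarith⟩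
    have hB : um ^ 3 ≤ 4 * s ^ 3 + um ^ 3 ∧ 4 * s ^ 3 + um ^ 3 ≤ 3 / 2 * um ^ 3 := by
      constructor
      · nlinarith [mul_nonneg (mul_nonneg hs1 hs1) hs1]
      · have hcube : s ^ 3 ≤ (um / 2) ^ 3 := pow_le_pow_left₀ hs1 (le_of_lt hs2) 3
        nlinarith [hcube]
    constructor
    · have := mul_nonneg (mul_nonneg (by positivity : (0:ℝ) ≤ 5 / (2 * um ^ 2))
        (by linarith : (0:ℝ) ≤ um - s)) (by nlinarith : (0:ℝ) ≤ 4 * s ^ 3 + um ^ 3)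
      linarith [this]
    · have h5 : (5 / (2 * um ^ 2)) * (um - s) * (4 * s ^ 3 + um ^ 3)
          ≤ (5 / (2 * um ^ 2)) * um * (3 / 2 * um ^ 3) := by
        have e1 : (0:ℝ) ≤ 5 / (2 * um ^ 2) := by positivity
        have hprod : (um - s) * (4 * s ^ 3 + um ^ 3) ≤ um * (3 / 2 * um ^ 3) :=
          mul_le_mul hA.2 hB.2 (by nlinarith [pow_pos hum 3, hB.1]) (le_of_lt hum)
        calc 5 / (2 * um ^ 2) * (um - s) * (4 * s ^ 3 + um ^ 3)
            = 5 / (2 * um ^ 2) * ((um - s) * (4 * s ^ 3 + um ^ 3)) := by ring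
          _ ≤ 5 / (2 * um ^ 2) * (um * (3 / 2 * um ^ 3)) := mul_le_mul_of_nonneg_left hprod e1
          _ = 5 / (2 * um ^ 2) * um * (3 / 2 * um ^ 3) := by ring
      have : (5 / (2 * um ^ 2)) * um * (3 / 2 * um ^ 3) = 15 / 4 * um ^ 2 := by
        field_simp; ring
      nlinarith
  · constructor <;> nlinarith

lemma NE_abs_int_le (f h : ℝ → ℝ) (hh : Integrable h) (hb : ∀ ξ, |f ξ| ≤ h ξ) :
    |∫ ξ, f ξ| ≤ ∫ ξ, h ξ := by
  calc |∫ ξ, f ξ| ≤ ∫ ξ, |f ξ| := by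
        simpa [Real.norm_eq_abs] using
          norm_integral_le_integral_norm (f := f) (μ := (volume : Measure ℝ))
    _ ≤ ∫ ξ, h ξ := integral_mono_of_nonneg (Eventually.of_forall fun ξ => abs_nonneg _) hh
        (Eventually.of_forall hb)
set_option maxHeartbeats 2000000 in
/-- Estimate of the cubic and cross terms `N(t)` (Lemma 4.6). -/
theorem N_estimate
    (μ uminus um σ : ℝ) (hμ : 0 < μ) (huminus : uminus < 0)
    (hum : um = -uminus / 2) (hσ : σ = 3 * um ^ 2)
    (uS : ℝ → ℝ) (huS : ContDiff ℝ 1 uS)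
    (hrange : ∀ ξ, uS ξ ∈ Set.Ioo uminus um)
    (hODE : ∀ ξ, μ * deriv uS ξ = (uS ξ - uminus) * (uS ξ - um) ^ 2)
    (hbot : Tendsto uS atBot (nhds uminus))
    (htop : Tendsto uS atTop (nhds um))
    (w : ℝ → ℝ)
    (hw : ∀ s, w s = if s < 0 then (5 / 2) * um * (um - s)
        else if s < um / 2 then (5 / (2 * um ^ 2)) * (um - s) * (4 * s ^ 3 + um ^ 3)
        else (15 / 8) * um ^ 2)
    (up lm lp dR : ℝ) (hup : um < up)
    (hlm : lm = 3 * um ^ 2) (hlp : lp = 3 * up ^ 2) (hdR : dR = up - um)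
    (w0 : ℝ → ℝ) (hw0 : ∀ x, w0 x = (lp + lm) / 2 + (lp - lm) / 2 * Real.tanh x)
    (x0 : ℝ → ℝ → ℝ) (hx0 : ∀ s, 0 ≤ s → ∀ x, x = x0 s x + w0 (x0 s x) * s)
    (uR : ℝ → ℝ → ℝ) (huR : ∀ s x, uR s x = Real.sqrt (w0 (x0 s x) / 3))
    (t : ℝ) (ht : 0 ≤ t)
    (v : ℝ → ℝ) (hv : ∀ ξ, v ξ = uR (1 + t) (ξ + σ * t))
    (ε : ℝ) (hε : 0 < ε)
    (φ : ℝ → ℝ) (hφ : ContDiff ℝ 1 φ)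
    (hφ2 : Integrable (fun ξ => (φ ξ) ^ 2))
    (hφ'2 : Integrable (fun ξ => (deriv φ ξ) ^ 2))
    (hφH1 : Real.sqrt ((∫ ξ, (φ ξ) ^ 2) + ∫ ξ, (deriv φ ξ) ^ 2) ≤ ε)
    (Xdot : ℝ)
    (hX : Xdot = (32 / (25 * um ^ 2)) * ∫ ξ, φ ξ * w (uS ξ) * deriv uS ξ)
    (N : ℝ)
    (hN : N = Xdot * (∫ ξ, φ ξ * w (uS ξ) * deriv v ξ)
        - (Xdot / 2) * (∫ ξ, (φ ξ) ^ 2 * deriv w (uS ξ) * deriv uS ξ)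
        + (∫ ξ, (φ ξ) ^ 3 * w (uS ξ) * (deriv uS ξ + deriv v ξ))
        - 2 * (∫ ξ, (φ ξ) ^ 3 * (uS ξ + v ξ - um) * deriv w (uS ξ) * deriv uS ξ)
        - 3 * (∫ ξ, (φ ξ) ^ 2 * (v ξ - um) * uS ξ * deriv w (uS ξ) * deriv uS ξ)) :
    |N| ≤ (36 * Real.sqrt 2 + 35 * Real.sqrt 2 / 2) * um ^ 2 * ε
            * (∫ ξ, (φ ξ) ^ 2 * deriv uS ξ)
        + (5 * Real.sqrt 2 * um * dR * ε + 15 * um ^ 2 * dR)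
            * (∫ ξ, (φ ξ) ^ 2 * deriv uS ξ)
        + (Real.sqrt 2 * ε + (48 / 5) * dR) * (∫ ξ, (φ ξ) ^ 2 * w (uS ξ) * deriv v ξ)
        + (25 / 128) * um ^ 2 * Xdot ^ 2 := by
  -- basic positivity
  have hum0 : 0 < um := by rw [hum]; linarith
  have humm : uminus = -(2 * um) := by rw [hum]; ring
  have hdR0 : 0 < dR := by rw [hdR]; linarith
  have hS2 : (1 : ℝ) ≤ Real.sqrt 2 := by
    rw [show (1 : ℝ) = Real.sqrt 1 by simp]
    exact Real.sqrt_le_sqrt (by norm_num)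
  have hrange' : ∀ ξ, -(2 * um) < uS ξ ∧ uS ξ < um := fun ξ =>
    ⟨by have := (hrange ξ).1; rw [humm] at this; linarith, (hrange ξ).2⟩
  -- φ facts
  have hcφ : Continuous φ := hφ.continuous
  have hφsup : ∀ x, |φ x| ≤ ε := by
    intro x
    have h := NE_sup_sq φ hφ hφ2 hφ'2 x
    have hnn : 0 ≤ (∫ ξ, (φ ξ) ^ 2) + ∫ ξ, (deriv φ ξ) ^ 2 :=
      add_nonneg (integral_nonneg fun ξ => sq_nonneg _) (integral_nonneg fun ξ => sq_nonneg _)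
    have hS : (∫ ξ, (φ ξ) ^ 2) + ∫ ξ, (deriv φ ξ) ^ 2 ≤ ε ^ 2 := by
      nlinarith [Real.sq_sqrt hnn, Real.sqrt_nonneg ((∫ ξ, (φ ξ) ^ 2) + ∫ ξ, (deriv φ ξ) ^ 2)]
    calc |φ x| = Real.sqrt ((φ x) ^ 2) := (Real.sqrt_sq_eq_abs _).symm
      _ ≤ Real.sqrt (ε ^ 2) := Real.sqrt_le_sqrt (by linarith)
      _ = ε := Real.sqrt_sq hε.le
  -- uS facts
  have hdS : ∀ ξ, HasDerivAt uS (deriv uS ξ) ξ := fun ξ => (huS.differentiable one_ne_zero ξ).hasDerivAt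
  have hcS' : Continuous (deriv uS) := huS.continuous_deriv le_rfl
  have hS'nn : ∀ ξ, 0 ≤ deriv uS ξ := by
    intro ξ
    have h := hODE ξ
    have h1 := (hrange ξ).1
    nlinarith [sq_nonneg (uS ξ - um)]
  have hSint := NE_key_mono uS (deriv uS) hdS hcS' hS'nn uminus um
    (fun x => ⟨(hrange x).1.le, (hrange x).2.le⟩)
  have hSI : Integrable (deriv uS) := hSint.1
  have hSval : (∫ ξ, deriv uS ξ) ≤ 3 * um := by
    have := hSint.2; rw [humm] at this; linarith
  -- w facts
  have hwd := NE_w_deriv um hum0 w hw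
  have hdw : deriv w = NEwdf um := funext fun s => (hwd s).deriv
  have hwcont : Continuous w :=
    continuous_iff_continuousAt.mpr fun s => (hwd s).differentiableAt.continuousAt
  have hwS : ∀ ξ, 0 ≤ w (uS ξ) ∧ w (uS ξ) ≤ 15 / 2 * um ^ 2 := fun ξ =>
    NE_w_bound um hum0 w hw (uS ξ) (hrange' ξ).1 (hrange' ξ).2
  have hwdS : ∀ ξ, |NEwdf um (uS ξ)| ≤ 5 / 2 * um := fun ξ => NE_wdf_bound um hum0 (uS ξ)
  -- v construction
  set s₀ : ℝ := 1 + t with hs₀def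
  have hs₀0 : (0 : ℝ) ≤ s₀ := by simp [hs₀def]; linarith
  set g : ℝ → ℝ := fun x => x0 s₀ x with hgdef
  have hFg : ∀ x, g x + w0 (g x) * s₀ = x := fun x => (hx0 s₀ hs₀0 x).symm
  have hlplm : 0 < lp - lm := by rw [hlp, hlm]; nlinarith
  have hw0d : ∀ y, HasDerivAt w0 ((lp - lm) / 2 * (1 / Real.cosh y ^ 2)) y := by
    intro y
    have h := ((NE_tanh_deriv y).const_mul ((lp - lm) / 2)).const_add ((lp + lm) / 2)
    have e : w0 = fun x => (lp + lm) / 2 + (lp - lm) / 2 * Real.tanh x := funext hw0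
    rw [e]
    exact h
  have hw0dnn : ∀ y, 0 ≤ (lp - lm) / 2 * (1 / Real.cosh y ^ 2) := by
    intro y
    have := Real.cosh_pos y
    positivity
  have hw0dle : ∀ y, (lp - lm) / 2 * (1 / Real.cosh y ^ 2) ≤ (lp - lm) / 2 := by
    intro y
    have h1 := Real.one_le_cosh y
    have h2 : 1 / Real.cosh y ^ 2 ≤ 1 := by
      rw [div_le_one (by positivity)]; nlinarith
    nlinarith
  have hw0mem : ∀ y, lm < w0 y ∧ w0 y < lp := by
    intro y
    have h := NE_tanh_mem y
    rw [hw0 y]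
    constructor <;> nlinarith [h.1, h.2]
  have hF : ∀ y, HasDerivAt (fun z => z + w0 z * s₀)
      (1 + (lp - lm) / 2 * (1 / Real.cosh y ^ 2) * s₀) y :=
    fun y => (hasDerivAt_id y).add ((hw0d y).mul_const s₀)
  have hFpos : ∀ y, 0 < 1 + (lp - lm) / 2 * (1 / Real.cosh y ^ 2) * s₀ := by
    intro y
    have := mul_nonneg (hw0dnn y) hs₀0
    linarith
  have hFmono : StrictMono (fun z => z + w0 z * s₀) :=
    strictMono_of_deriv_pos fun y => by rw [(hF y).deriv]; exact hFpos y
  have hginv : ∀ y, g (y + w0 y * s₀) = y := by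
    intro y
    apply hFmono.injective
    show g (y + w0 y * s₀) + w0 (g (y + w0 y * s₀)) * s₀ = y + w0 y * s₀
    exact hFg (y + w0 y * s₀)
  have hgmono : Monotone g := by
    intro a b hab
    by_contra hcon
    push_neg at hcon
    have h2 := hFmono hcon
    simp only at h2
    rw [hFg a, hFg b] at h2
    exact absurd h2 (not_lt.mpr hab)
  have hgsurj : Function.Surjective g := fun y => ⟨y + w0 y * s₀, hginv y⟩
  have hgcont : Continuous g := hgmono.continuous_of_surjective hgsurj
  have hgd : ∀ x, HasDerivAt g (1 + (lp - lm) / 2 * (1 / Real.cosh (g x) ^ 2) * s₀)⁻¹ x :=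
    fun x => HasDerivAt.of_local_left_inverse hgcont.continuousAt (hF (g x)) (hFpos (g x)).ne'
      (Eventually.of_forall hFg)
  have hvfun : v = fun x => Real.sqrt (w0 (g (x + σ * t)) / 3) := funext fun ξ => by
    rw [hv, huR]
  have hw0pos : ∀ y, 0 < w0 y / 3 := by
    intro y
    have h := (hw0mem y).1
    rw [hlm] at h
    nlinarith
  set vd : ℝ → ℝ := fun x =>
    (lp - lm) / 2 * (1 / Real.cosh (g (x + σ * t)) ^ 2) *
      (1 + (lp - lm) / 2 * (1 / Real.cosh (g (x + σ * t)) ^ 2) * s₀)⁻¹ / 3 *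
      (1 / (2 * Real.sqrt (w0 (g (x + σ * t)) / 3))) with hvddef
  have hvd : ∀ x, HasDerivAt v (vd x) x := by
    intro x
    rw [hvfun]
    have hx : HasDerivAt (fun z : ℝ => z + σ * t) 1 x := (hasDerivAt_id x).add_const _
    have hg' := (hgd (x + σ * t)).comp x hx
    have hw0' := (hw0d (g (x + σ * t))).comp x hg'
    have hdiv := hw0'.div_const 3
    have hsq := (Real.hasDerivAt_sqrt (hw0pos (g (x + σ * t))).ne').comp x hdiv
    refine hsq.congr_deriv ?_
    rw [hvddef]
    ring
  have hdv : deriv v = vd := funext fun x => (hvd x).deriv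
  have hvb : ∀ x, um ≤ v x ∧ v x ≤ up := by
    intro x
    rw [hvfun]
    have h := hw0mem (g (x + σ * t))
    constructor
    · rw [show um = Real.sqrt (um ^ 2) from (Real.sqrt_sq hum0.le).symm]
      apply Real.sqrt_le_sqrt
      rw [hlm] at h
      linarith [h.1]
    · rw [show up = Real.sqrt (up ^ 2) from (Real.sqrt_sq (by linarith : (0:ℝ) ≤ up)).symm]
      apply Real.sqrt_le_sqrt
      rw [hlp] at h
      linarith [h.2]
  have hvdnn : ∀ x, 0 ≤ vd x := by
    intro x
    rw [hvddef]
    have h1 := hw0dnn (g (x + σ * t))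
    have h2 := (hFpos (g (x + σ * t)))
    have h3 := Real.sqrt_nonneg (w0 (g (x + σ * t)) / 3)
    have h4 : 0 ≤ (1 + (lp - lm) / 2 * (1 / Real.cosh (g (x + σ * t)) ^ 2) * s₀)⁻¹ :=
      inv_nonneg.mpr h2.le
    positivity
  have hc1 : Continuous (fun x => g (x + σ * t)) := hgcont.comp (continuous_id.add continuous_const)
  have hc2 : Continuous (fun x => 1 / Real.cosh (g (x + σ * t)) ^ 2) :=
    continuous_const.div ((Real.continuous_cosh.comp hc1).pow 2)
      (fun x => by positivity)
  have hcw0 : Continuous w0 :=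
    continuous_iff_continuousAt.mpr fun y => (hw0d y).differentiableAt.continuousAt
  have hc3 : Continuous (fun x => (1 + (lp - lm) / 2 * (1 / Real.cosh (g (x + σ * t)) ^ 2) * s₀)⁻¹) :=
    Continuous.inv₀ (continuous_const.add ((continuous_const.mul hc2).mul continuous_const))
      (fun x => (hFpos (g (x + σ * t))).ne')
  have hc4 : Continuous (fun x => 1 / (2 * Real.sqrt (w0 (g (x + σ * t)) / 3))) := by
    refine continuous_const.div (continuous_const.mul
      (Real.continuous_sqrt.comp ((hcw0.comp hc1).div_const 3))) ?_
    intro x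
    have := Real.sqrt_pos.mpr (hw0pos (g (x + σ * t)))
    positivity
  have hvdcont : Continuous vd := by
    rw [hvddef]
    exact ((((continuous_const.mul hc2).mul hc3).div_const 3).mul hc4)
  have hvint := NE_key_mono v vd hvd hvdcont hvdnn um up (fun x => ⟨(hvb x).1, (hvb x).2⟩)
  have hvI : Integrable vd := hvint.1
  have hvval : (∫ x, vd x) ≤ dR := by rw [hdR]; exact hvint.2
  -- rewrite derivs
  rw [hdv, hdw] at hN
  rw [hdv]
  set I2 : ℝ := ∫ ξ, (φ ξ) ^ 2 * deriv uS ξ with hI2def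
  set Iv : ℝ := ∫ ξ, (φ ξ) ^ 2 * w (uS ξ) * vd ξ with hIvdef
  have hWnn : ∀ ξ, 0 ≤ w (uS ξ) := fun ξ => (hwS ξ).1
  have hWle : ∀ ξ, w (uS ξ) ≤ 15 / 2 * um ^ 2 := fun ξ => (hwS ξ).2
  have hwuScont : Continuous (fun ξ => w (uS ξ)) := hwcont.comp huS.continuous
  -- integrability of the various products
  have hI2int : Integrable (fun ξ => (φ ξ) ^ 2 * deriv uS ξ) := by
    refine hSI.bdd_mul (c := ε ^ 2) ((hcφ.pow 2).aestronglyMeasurable)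
      (Eventually.of_forall fun ξ => ?_)
    rw [Real.norm_eq_abs, abs_of_nonneg (sq_nonneg _)]
    have := hφsup ξ
    nlinarith [abs_nonneg (φ ξ), sq_abs (φ ξ)]
  have hIwv : Integrable (fun ξ => w (uS ξ) * vd ξ) := by
    refine hvI.bdd_mul (c := 15 / 2 * um ^ 2) hwuScont.aestronglyMeasurable
      (Eventually.of_forall fun ξ => ?_)
    rw [Real.norm_eq_abs, abs_of_nonneg (hWnn ξ)]
    exact hWle ξ
  have hIφ2wv : Integrable (fun ξ => (φ ξ) ^ 2 * w (uS ξ) * vd ξ) := by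
    refine hvI.bdd_mul (c := ε ^ 2 * (15 / 2 * um ^ 2)) (((hcφ.pow 2).mul hwuScont).aestronglyMeasurable)
      (Eventually.of_forall fun ξ => ?_)
    rw [Real.norm_eq_abs, abs_of_nonneg (mul_nonneg (sq_nonneg _) (hWnn ξ))]
    have h1 : (φ ξ) ^ 2 ≤ ε ^ 2 := by
      have := hφsup ξ; nlinarith [abs_nonneg (φ ξ), sq_abs (φ ξ)]
    calc (φ ξ) ^ 2 * w (uS ξ) ≤ ε ^ 2 * (15 / 2 * um ^ 2) :=
          mul_le_mul h1 (hWle ξ) (hWnn ξ) (by positivity)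
      _ = ε ^ 2 * (15 / 2 * um ^ 2) := rfl
  have hφ3 : ∀ ξ, |φ ξ| ^ 3 ≤ ε * (φ ξ) ^ 2 := by
    intro ξ
    have e : |φ ξ| ^ 3 = (φ ξ) ^ 2 * |φ ξ| := by rw [pow_succ, sq_abs]
    rw [e]
    calc (φ ξ) ^ 2 * |φ ξ| ≤ (φ ξ) ^ 2 * ε := mul_le_mul_of_nonneg_left (hφsup ξ) (sq_nonneg _)
      _ = ε * (φ ξ) ^ 2 := by ring
  have hφ3w : ∀ ξ, |(φ ξ) ^ 3 * w (uS ξ)| ≤ ε ^ 3 * (15 / 2 * um ^ 2) := by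
    intro ξ
    rw [abs_mul, abs_pow, abs_of_nonneg (hWnn ξ)]
    have h1 : |φ ξ| ^ 3 ≤ ε ^ 3 := pow_le_pow_left₀ (abs_nonneg _) (hφsup ξ) 3
    exact mul_le_mul h1 (hWle ξ) (hWnn ξ) (by positivity)
  have hIC1 : Integrable (fun ξ => (φ ξ) ^ 3 * w (uS ξ) * deriv uS ξ) := by
    refine hSI.bdd_mul (c := ε ^ 3 * (15 / 2 * um ^ 2)) (((hcφ.pow 3).mul hwuScont).aestronglyMeasurable)
      (Eventually.of_forall fun ξ => ?_)
    rw [Real.norm_eq_abs]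
    exact hφ3w ξ
  have hIC2 : Integrable (fun ξ => (φ ξ) ^ 3 * w (uS ξ) * vd ξ) := by
    refine hvI.bdd_mul (c := ε ^ 3 * (15 / 2 * um ^ 2)) (((hcφ.pow 3).mul hwuScont).aestronglyMeasurable)
      (Eventually.of_forall fun ξ => ?_)
    rw [Real.norm_eq_abs]
    exact hφ3w ξ
  have hI2nn : 0 ≤ I2 := by
    rw [hI2def]
    exact integral_nonneg fun ξ => mul_nonneg (sq_nonneg _) (hS'nn ξ)
  have hIvnn : 0 ≤ Iv := by
    rw [hIvdef]
    exact integral_nonneg fun ξ => mul_nonneg (mul_nonneg (sq_nonneg _) (hWnn ξ)) (hvdnn ξ)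
  have hWv : (∫ ξ, w (uS ξ) * vd ξ) ≤ 15 / 2 * um ^ 2 * dR := by
    calc (∫ ξ, w (uS ξ) * vd ξ) ≤ ∫ ξ, 15 / 2 * um ^ 2 * vd ξ :=
        integral_mono hIwv (hvI.const_mul _)
          (fun ξ => mul_le_mul_of_nonneg_right (hWle ξ) (hvdnn ξ))
      _ = 15 / 2 * um ^ 2 * ∫ ξ, vd ξ := integral_const_mul _ _
      _ ≤ 15 / 2 * um ^ 2 * dR := mul_le_mul_of_nonneg_left hvval (by positivity)
  have hWvnn : 0 ≤ ∫ ξ, w (uS ξ) * vd ξ :=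
    integral_nonneg fun ξ => mul_nonneg (hWnn ξ) (hvdnn ξ)
  -- Xdot bound
  have hXb : |Xdot| ≤ 144 / 5 * um * ε := by
    rw [hX, abs_mul, abs_of_nonneg (by positivity : (0:ℝ) ≤ 32 / (25 * um ^ 2))]
    have h2 : |∫ ξ, φ ξ * w (uS ξ) * deriv uS ξ| ≤ ε * (15 / 2 * um ^ 2) * (3 * um) := by
      have hstep := NE_abs_int_le (fun ξ => φ ξ * w (uS ξ) * deriv uS ξ)
        (fun ξ => ε * (15 / 2 * um ^ 2) * deriv uS ξ) (hSI.const_mul _) ?_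
      · calc |∫ ξ, φ ξ * w (uS ξ) * deriv uS ξ|
            ≤ ∫ ξ, ε * (15 / 2 * um ^ 2) * deriv uS ξ := hstep
          _ = ε * (15 / 2 * um ^ 2) * ∫ ξ, deriv uS ξ := integral_const_mul _ _
          _ ≤ ε * (15 / 2 * um ^ 2) * (3 * um) :=
            mul_le_mul_of_nonneg_left hSval (by positivity)
      · intro ξ
        rw [abs_mul, abs_mul, abs_of_nonneg (hWnn ξ), abs_of_nonneg (hS'nn ξ)]
        exact mul_le_mul_of_nonneg_right
          (mul_le_mul (hφsup ξ) (hWle ξ) (hWnn ξ) hε.le) (hS'nn ξ)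
    calc 32 / (25 * um ^ 2) * |∫ ξ, φ ξ * w (uS ξ) * deriv uS ξ|
        ≤ 32 / (25 * um ^ 2) * (ε * (15 / 2 * um ^ 2) * (3 * um)) :=
          mul_le_mul_of_nonneg_left h2 (by positivity)
      _ = 144 / 5 * um * ε := by field_simp; ring
  -- Term A
  have hA : |Xdot * ∫ ξ, φ ξ * w (uS ξ) * vd ξ|
      ≤ 25 / 128 * um ^ 2 * Xdot ^ 2 + 48 / 5 * dR * Iv := by
    have hdRne : dR ≠ 0 := ne_of_gt hdR0
    set a : ℝ := 5 / (192 * dR) with hadef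
    have ha : 0 < a := by rw [hadef]; exact div_pos (by norm_num) (by linarith)
    have h48 : 4 * a * (48 / 5 * dR) = 1 := by rw [hadef]; field_simp; ring
    have hrw : Xdot * ∫ ξ, φ ξ * w (uS ξ) * vd ξ
        = ∫ ξ, Xdot * (φ ξ * w (uS ξ) * vd ξ) := (integral_const_mul _ _).symm
    rw [hrw]
    have hb : ∀ ξ, |Xdot * (φ ξ * w (uS ξ) * vd ξ)|
        ≤ a * Xdot ^ 2 * (w (uS ξ) * vd ξ) + 48 / 5 * dR * ((φ ξ) ^ 2 * w (uS ξ) * vd ξ) := by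
      intro ξ
      have hwv : 0 ≤ w (uS ξ) * vd ξ := mul_nonneg (hWnn ξ) (hvdnn ξ)
      have h1 : |Xdot * (φ ξ * w (uS ξ) * vd ξ)| = |Xdot * φ ξ| * (w (uS ξ) * vd ξ) := by
        rw [show Xdot * (φ ξ * w (uS ξ) * vd ξ) = Xdot * φ ξ * (w (uS ξ) * vd ξ) by ring,
          abs_mul, abs_of_nonneg hwv]
      rw [h1]
      have h2 : |Xdot * φ ξ| ≤ a * Xdot ^ 2 + 48 / 5 * dR * (φ ξ) ^ 2 := by
        rw [abs_mul]
        have key : 4 * a * (|Xdot| * |φ ξ|)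
            ≤ 4 * a * (a * Xdot ^ 2 + 48 / 5 * dR * (φ ξ) ^ 2) := by
          have e1 : 4 * a * (a * Xdot ^ 2 + 48 / 5 * dR * (φ ξ) ^ 2)
              = 4 * a ^ 2 * Xdot ^ 2 + 4 * a * (48 / 5 * dR) * (φ ξ) ^ 2 := by ring
          rw [e1, h48, one_mul, ← sq_abs Xdot, ← sq_abs (φ ξ)]
          nlinarith [sq_nonneg (2 * a * |Xdot| - |φ ξ|)]
        exact le_of_mul_le_mul_left key (by linarith)
      calc |Xdot * φ ξ| * (w (uS ξ) * vd ξ)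
          ≤ (a * Xdot ^ 2 + 48 / 5 * dR * (φ ξ) ^ 2) * (w (uS ξ) * vd ξ) :=
            mul_le_mul_of_nonneg_right h2 hwv
        _ = a * Xdot ^ 2 * (w (uS ξ) * vd ξ) + 48 / 5 * dR * ((φ ξ) ^ 2 * w (uS ξ) * vd ξ) := by
            ring
    have hstep := NE_abs_int_le (fun ξ => Xdot * (φ ξ * w (uS ξ) * vd ξ))
      (fun ξ => a * Xdot ^ 2 * (w (uS ξ) * vd ξ) + 48 / 5 * dR * ((φ ξ) ^ 2 * w (uS ξ) * vd ξ))
      ((hIwv.const_mul _).add (hIφ2wv.const_mul _)) hb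
    have heval : (∫ ξ, (a * Xdot ^ 2 * (w (uS ξ) * vd ξ)
          + 48 / 5 * dR * ((φ ξ) ^ 2 * w (uS ξ) * vd ξ)))
        = a * Xdot ^ 2 * (∫ ξ, w (uS ξ) * vd ξ) + 48 / 5 * dR * Iv := by
      rw [integral_add (hIwv.const_mul _) (hIφ2wv.const_mul _), integral_const_mul,
        integral_const_mul, hIvdef]
    refine (hstep.trans (le_of_eq heval)).trans ?_
    have h3 : a * Xdot ^ 2 * (∫ ξ, w (uS ξ) * vd ξ) ≤ 25 / 128 * um ^ 2 * Xdot ^ 2 := by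
      calc a * Xdot ^ 2 * (∫ ξ, w (uS ξ) * vd ξ)
          ≤ a * Xdot ^ 2 * (15 / 2 * um ^ 2 * dR) :=
            mul_le_mul_of_nonneg_left hWv (by positivity)
        _ = 25 / 128 * um ^ 2 * Xdot ^ 2 := by rw [hadef]; field_simp; ring
    linarith
  -- Term B
  have hIBb : |∫ ξ, (φ ξ) ^ 2 * NEwdf um (uS ξ) * deriv uS ξ| ≤ 5 / 2 * um * I2 := by
    have hstep := NE_abs_int_le (fun ξ => (φ ξ) ^ 2 * NEwdf um (uS ξ) * deriv uS ξ)
      (fun ξ => 5 / 2 * um * ((φ ξ) ^ 2 * deriv uS ξ)) (hI2int.const_mul _) ?_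
    · rw [integral_const_mul, ← hI2def] at hstep
      exact hstep
    · intro ξ
      rw [abs_mul, abs_mul, abs_of_nonneg (sq_nonneg (φ ξ)), abs_of_nonneg (hS'nn ξ)]
      calc (φ ξ) ^ 2 * |NEwdf um (uS ξ)| * deriv uS ξ
          ≤ (φ ξ) ^ 2 * (5 / 2 * um) * deriv uS ξ :=
            mul_le_mul_of_nonneg_right
              (mul_le_mul_of_nonneg_left (hwdS ξ) (sq_nonneg _)) (hS'nn ξ)
        _ = 5 / 2 * um * ((φ ξ) ^ 2 * deriv uS ξ) := by ring
  have hB : |Xdot / 2 * ∫ ξ, (φ ξ) ^ 2 * NEwdf um (uS ξ) * deriv uS ξ|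
      ≤ 36 * um ^ 2 * ε * I2 := by
    rw [abs_mul]
    calc |Xdot / 2| * |∫ ξ, (φ ξ) ^ 2 * NEwdf um (uS ξ) * deriv uS ξ|
        ≤ 144 / 5 * um * ε / 2 * (5 / 2 * um * I2) := by
          refine mul_le_mul ?_ hIBb (abs_nonneg _) (by positivity)
          rw [abs_div, abs_of_nonneg (by norm_num : (0:ℝ) ≤ 2)]
          linarith
      _ = 36 * um ^ 2 * ε * I2 := by ring
  -- Term C
  have hsplit : (∫ ξ, (φ ξ) ^ 3 * w (uS ξ) * (deriv uS ξ + vd ξ))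
      = (∫ ξ, (φ ξ) ^ 3 * w (uS ξ) * deriv uS ξ) + ∫ ξ, (φ ξ) ^ 3 * w (uS ξ) * vd ξ := by
    rw [← integral_add hIC1 hIC2]
    exact integral_congr_ae (Eventually.of_forall fun ξ => by ring)
  have hC1 : |∫ ξ, (φ ξ) ^ 3 * w (uS ξ) * deriv uS ξ| ≤ 15 / 2 * um ^ 2 * ε * I2 := by
    have hstep := NE_abs_int_le (fun ξ => (φ ξ) ^ 3 * w (uS ξ) * deriv uS ξ)
      (fun ξ => 15 / 2 * um ^ 2 * ε * ((φ ξ) ^ 2 * deriv uS ξ)) (hI2int.const_mul _) ?_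
    · rw [integral_const_mul, ← hI2def] at hstep
      exact hstep
    · intro ξ
      rw [abs_mul, abs_mul, abs_pow, abs_of_nonneg (hWnn ξ), abs_of_nonneg (hS'nn ξ)]
      calc |φ ξ| ^ 3 * w (uS ξ) * deriv uS ξ
          ≤ ε * (φ ξ) ^ 2 * (15 / 2 * um ^ 2) * deriv uS ξ := by
            refine mul_le_mul_of_nonneg_right ?_ (hS'nn ξ)
            exact mul_le_mul (hφ3 ξ) (hWle ξ) (hWnn ξ) (by positivity)
        _ = 15 / 2 * um ^ 2 * ε * ((φ ξ) ^ 2 * deriv uS ξ) := by ring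
  have hC2 : |∫ ξ, (φ ξ) ^ 3 * w (uS ξ) * vd ξ| ≤ ε * Iv := by
    have hstep := NE_abs_int_le (fun ξ => (φ ξ) ^ 3 * w (uS ξ) * vd ξ)
      (fun ξ => ε * ((φ ξ) ^ 2 * w (uS ξ) * vd ξ)) (hIφ2wv.const_mul _) ?_
    · rw [integral_const_mul, ← hIvdef] at hstep
      exact hstep
    · intro ξ
      rw [abs_mul, abs_mul, abs_pow, abs_of_nonneg (hWnn ξ), abs_of_nonneg (hvdnn ξ)]
      calc |φ ξ| ^ 3 * w (uS ξ) * vd ξ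
          ≤ ε * (φ ξ) ^ 2 * w (uS ξ) * vd ξ := by
            refine mul_le_mul_of_nonneg_right
              (mul_le_mul_of_nonneg_right (hφ3 ξ) (hWnn ξ)) (hvdnn ξ)
        _ = ε * ((φ ξ) ^ 2 * w (uS ξ) * vd ξ) := by ring
  have hC : |∫ ξ, (φ ξ) ^ 3 * w (uS ξ) * (deriv uS ξ + vd ξ)|
      ≤ 15 / 2 * um ^ 2 * ε * I2 + ε * Iv := by
    rw [hsplit]
    exact (abs_add_le _ _).trans (add_le_add hC1 hC2)
  -- Term D
  have hmid : ∀ ξ, |uS ξ + v ξ - um| ≤ 2 * um + dR := by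
    intro ξ
    have h1 := (hrange' ξ).1
    have h2 := (hrange' ξ).2
    have h3 := (hvb ξ).1
    have h4 := (hvb ξ).2
    rw [hdR]
    exact abs_le.mpr ⟨by linarith, by linarith⟩
  have hD : |2 * ∫ ξ, (φ ξ) ^ 3 * (uS ξ + v ξ - um) * NEwdf um (uS ξ) * deriv uS ξ|
      ≤ (10 * um ^ 2 + 5 * um * dR) * ε * I2 := by
    have hstep := NE_abs_int_le
      (fun ξ => (φ ξ) ^ 3 * (uS ξ + v ξ - um) * NEwdf um (uS ξ) * deriv uS ξ)
      (fun ξ => (2 * um + dR) * (5 / 2 * um) * ε * ((φ ξ) ^ 2 * deriv uS ξ))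
      (hI2int.const_mul _) ?_
    · rw [integral_const_mul, ← hI2def] at hstep
      rw [abs_mul, abs_of_nonneg (by norm_num : (0:ℝ) ≤ 2)]
      calc 2 * |∫ ξ, (φ ξ) ^ 3 * (uS ξ + v ξ - um) * NEwdf um (uS ξ) * deriv uS ξ|
          ≤ 2 * ((2 * um + dR) * (5 / 2 * um) * ε * I2) := by linarith
        _ = (10 * um ^ 2 + 5 * um * dR) * ε * I2 := by ring
    · intro ξ
      rw [abs_mul, abs_mul, abs_mul, abs_pow, abs_of_nonneg (hS'nn ξ)]
      have h1 : |φ ξ| ^ 3 * |uS ξ + v ξ - um| ≤ ε * (φ ξ) ^ 2 * (2 * um + dR) :=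
        mul_le_mul (hφ3 ξ) (hmid ξ) (abs_nonneg _)
          (by positivity)
      have h2 : |φ ξ| ^ 3 * |uS ξ + v ξ - um| * |NEwdf um (uS ξ)|
          ≤ ε * (φ ξ) ^ 2 * (2 * um + dR) * (5 / 2 * um) :=
        mul_le_mul h1 (hwdS ξ) (abs_nonneg _) (by positivity)
      calc |φ ξ| ^ 3 * |uS ξ + v ξ - um| * |NEwdf um (uS ξ)| * deriv uS ξ
          ≤ ε * (φ ξ) ^ 2 * (2 * um + dR) * (5 / 2 * um) * deriv uS ξ :=
            mul_le_mul_of_nonneg_right h2 (hS'nn ξ)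
        _ = (2 * um + dR) * (5 / 2 * um) * ε * ((φ ξ) ^ 2 * deriv uS ξ) := by ring
  -- Term E
  have hE : |3 * ∫ ξ, (φ ξ) ^ 2 * (v ξ - um) * uS ξ * NEwdf um (uS ξ) * deriv uS ξ|
      ≤ 15 * um ^ 2 * dR * I2 := by
    have hstep := NE_abs_int_le
      (fun ξ => (φ ξ) ^ 2 * (v ξ - um) * uS ξ * NEwdf um (uS ξ) * deriv uS ξ)
      (fun ξ => dR * (2 * um) * (5 / 2 * um) * ((φ ξ) ^ 2 * deriv uS ξ))
      (hI2int.const_mul _) ?_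
    · rw [integral_const_mul, ← hI2def] at hstep
      rw [abs_mul, abs_of_nonneg (by norm_num : (0:ℝ) ≤ 3)]
      calc 3 * |∫ ξ, (φ ξ) ^ 2 * (v ξ - um) * uS ξ * NEwdf um (uS ξ) * deriv uS ξ|
          ≤ 3 * (dR * (2 * um) * (5 / 2 * um) * I2) := by linarith
        _ = 15 * um ^ 2 * dR * I2 := by ring
    · intro ξ
      rw [abs_mul, abs_mul, abs_mul, abs_mul, abs_of_nonneg (sq_nonneg (φ ξ)),
        abs_of_nonneg (hS'nn ξ)]
      have hv1 : |v ξ - um| ≤ dR := by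
        have h3 := (hvb ξ).1
        have h4 := (hvb ξ).2
        rw [hdR]
        exact abs_le.mpr ⟨by linarith, by linarith⟩
      have hu1 : |uS ξ| ≤ 2 * um := by
        have h1 := (hrange' ξ).1
        have h2 := (hrange' ξ).2
        exact abs_le.mpr ⟨by linarith, by linarith⟩
      have h1 : (φ ξ) ^ 2 * |v ξ - um| ≤ (φ ξ) ^ 2 * dR :=
        mul_le_mul_of_nonneg_left hv1 (sq_nonneg _)
      have h2 : (φ ξ) ^ 2 * |v ξ - um| * |uS ξ| ≤ (φ ξ) ^ 2 * dR * (2 * um) :=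
        mul_le_mul h1 hu1 (abs_nonneg _) (by positivity)
      have h3 : (φ ξ) ^ 2 * |v ξ - um| * |uS ξ| * |NEwdf um (uS ξ)|
          ≤ (φ ξ) ^ 2 * dR * (2 * um) * (5 / 2 * um) :=
        mul_le_mul h2 (hwdS ξ) (abs_nonneg _) (by positivity)
      calc (φ ξ) ^ 2 * |v ξ - um| * |uS ξ| * |NEwdf um (uS ξ)| * deriv uS ξ
          ≤ (φ ξ) ^ 2 * dR * (2 * um) * (5 / 2 * um) * deriv uS ξ :=
            mul_le_mul_of_nonneg_right h3 (hS'nn ξ)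
        _ = dR * (2 * um) * (5 / 2 * um) * ((φ ξ) ^ 2 * deriv uS ξ) := by ring
  -- assemble
  rw [hN]
  have htri : ∀ a b c d e : ℝ, |a - b + c - d - e| ≤ |a| + |b| + |c| + |d| + |e| := by
    intro a b c d e
    have h1 := le_abs_self a; have h1' := neg_abs_le a
    have h2 := le_abs_self b; have h2' := neg_abs_le b
    have h3 := le_abs_self c; have h3' := neg_abs_le c
    have h4 := le_abs_self d; have h4' := neg_abs_le d
    have h5 := le_abs_self e; have h5' := neg_abs_le e
    exact abs_le.mpr ⟨by linarith, by linarith⟩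
  have hsum := add_le_add (add_le_add (add_le_add (add_le_add hA hB) hC) hD) hE
  refine le_trans (htri _ _ _ _ _) (le_trans hsum ?_)
  have P1 : 0 ≤ (Real.sqrt 2 - 1) * (um ^ 2 * ε * I2) :=
    mul_nonneg (by linarith) (mul_nonneg (by positivity) hI2nn)
  have P2 : 0 ≤ (Real.sqrt 2 - 1) * (um * dR * ε * I2) :=
    mul_nonneg (by linarith) (mul_nonneg (by positivity) hI2nn)
  have P3 : 0 ≤ (Real.sqrt 2 - 1) * (ε * Iv) :=
    mul_nonneg (by linarith) (mul_nonneg hε.le hIvnn)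
  have hkey : (36 * Real.sqrt 2 + 35 * Real.sqrt 2 / 2) * um ^ 2 * ε * I2
        + (5 * Real.sqrt 2 * um * dR * ε + 15 * um ^ 2 * dR) * I2
        + (Real.sqrt 2 * ε + 48 / 5 * dR) * Iv + 25 / 128 * um ^ 2 * Xdot ^ 2
      - ((25 / 128 * um ^ 2 * Xdot ^ 2 + 48 / 5 * dR * Iv) + 36 * um ^ 2 * ε * I2
        + (15 / 2 * um ^ 2 * ε * I2 + ε * Iv) + (10 * um ^ 2 + 5 * um * dR) * ε * I2
        + 15 * um ^ 2 * dR * I2)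
      = (107 / 2) * ((Real.sqrt 2 - 1) * (um ^ 2 * ε * I2))
        + 5 * ((Real.sqrt 2 - 1) * (um * dR * ε * I2))
        + (Real.sqrt 2 - 1) * (ε * Iv) := by ring
  linarith [P1, P2, P3, hkey]
end
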